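/- arXiv:2509.13248 — 7 statements merged into one kernel-verified Lean document; each statement's English description precedes it below -/
import Mathlib

section
/- Let p be a prime, n ≥ 3 an odd integer, and write B = p^k·B', C = p^ℓ·C' with p ∤ B'C'. If ℓ is odd, k is odd, and ℓ < k < n + ℓ, then there is no solution (x, y, z) ∈ ℤ_p³ to x² + B·y² = C·z^n with at least one of x, y, z a p-adic unit. -/
variable {p : ℕ} [Fact p.Prime]

lemma aux_val_inj {a b : ℤ_[p]} (ha : a ≠ 0) (hb : b ≠ 0) (h : ‖a‖ = ‖b‖) :
    a.valuation = b.valuation := by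
  rw [PadicInt.norm_eq_zpow_neg_valuation ha, PadicInt.norm_eq_zpow_neg_valuation hb] at h
  have hp1 : (1:ℝ) < p := by exact_mod_cast (Fact.out : p.Prime).one_lt
  exact_mod_cast neg_inj.mp (zpow_right_injective₀ (by linarith) (ne_of_gt hp1) h)

lemma aux_val_neg (a : ℤ_[p]) : (-a).valuation = a.valuation := by
  rcases eq_or_ne a 0 with rfl | ha
  · simp
  · exact aux_val_inj (neg_ne_zero.mpr ha) ha (norm_neg a)

lemma aux_val_unit {a : ℤ_[p]} (ha : IsUnit a) : a.valuation = 0 := by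
  have h1 : ‖a‖ = 1 := PadicInt.isUnit_iff.mp ha
  have ha0 : a ≠ 0 := ha.ne_zero
  have := aux_val_inj ha0 (one_ne_zero : (1:ℤ_[p]) ≠ 0) (by rw [h1, norm_one])
  simpa [PadicInt.valuation_one] using this

lemma aux_val_mul {a b : ℤ_[p]} (ha : a ≠ 0) (hb : b ≠ 0) :
    (a * b).valuation = a.valuation + b.valuation := by
  exact PadicInt.valuation_mul ha hb

lemma aux_val_pow {a : ℤ_[p]} (ha : a ≠ 0) (m : ℕ) : (a ^ m).valuation = m * a.valuation := by
  induction m with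
  | zero => simp [PadicInt.valuation_one]
  | succ i ih =>
    rw [pow_succ, aux_val_mul (pow_ne_zero i ha) ha, ih]; push_cast; ring

lemma aux_val_add {a b : ℤ_[p]} (h : a + b ≠ 0) :
    min a.valuation b.valuation ≤ (a + b).valuation := by
  exact PadicInt.le_valuation_add h

lemma aux_dvd_of_pos {a : ℤ_[p]} (h : 0 < a.valuation) : (p : ℤ_[p]) ∣ a := by
  rcases eq_or_ne a 0 with rfl | ha
  · exact dvd_zero _
  · rw [← PadicInt.norm_lt_one_iff_dvd, PadicInt.norm_eq_zpow_neg_valuation ha]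
    have hp1 : (1:ℝ) < p := by exact_mod_cast (Fact.out : p.Prime).one_lt
    calc (p:ℝ) ^ (-(a.valuation:ℤ)) < (p:ℝ)^(0:ℤ) := by
          apply zpow_lt_zpow_right₀ hp1; omega
      _ = 1 := zpow_zero _

/-- If `ℓ` is odd, `k` is odd, and `ℓ < k < n + ℓ`, then `x² + p^k B' y² = p^ℓ C' z^n`
has no primitive solution in `ℤ_[p]`. -/
theorem stmt_0 (p : ℕ) [Fact p.Prime] (n k ℓ : ℕ) (hn3 : 3 ≤ n) (hnodd : Odd n)
    (B' C' : ℤ_[p]) (hB' : IsUnit B') (hC' : IsUnit C')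
    (hℓ : Odd ℓ) (hk : Odd k) (hlk : ℓ < k) (hkn : k < n + ℓ) :
    ¬ ∃ x y z : ℤ_[p],
      x ^ 2 + ((p : ℤ_[p]) ^ k * B') * y ^ 2 = ((p : ℤ_[p]) ^ ℓ * C') * z ^ n ∧
      ¬ ((p : ℤ_[p]) ∣ x ∧ (p : ℤ_[p]) ∣ y ∧ (p : ℤ_[p]) ∣ z) := by
  rintro ⟨x, y, z, heq, hprim⟩
  apply hprim
  have hpprime : p.Prime := Fact.out
  have hp0 : (p : ℤ_[p]) ≠ 0 := Nat.cast_ne_zero.mpr hpprime.pos.ne'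
  have hB0 : B' ≠ 0 := hB'.ne_zero
  have hC0 : C' ≠ 0 := hC'.ne_zero
  have hvB : B'.valuation = 0 := aux_val_unit hB'
  have hvC : C'.valuation = 0 := aux_val_unit hC'
  rw [mul_assoc, mul_assoc] at heq
  have hnoddZ : Odd (n : ℤ) := by exact_mod_cast hnodd
  obtain ⟨c, hlc⟩ := hℓ
  obtain ⟨b, hkb⟩ := hk
  -- valuation of the middle term when y ≠ 0
  have hTval : ∀ (hy : y ≠ 0), ((p : ℤ_[p]) ^ k * (B' * y ^ 2)).valuation = k + 2 * y.valuation := by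
    intro hy
    rw [PadicInt.valuation_p_pow_mul _ _ (mul_ne_zero hB0 (pow_ne_zero 2 hy)),
      aux_val_mul hB0 (pow_ne_zero 2 hy), aux_val_pow hy, hvB]
    push_cast; ring
  have hvznn : 0 ≤ z.valuation := Nat.zero_le _
  have hvynn : 0 ≤ y.valuation := Nat.zero_le _
  have hvxnn : 0 ≤ x.valuation := Nat.zero_le _
  by_cases hz : z = 0
  · subst hz
    rw [zero_pow (by omega), mul_zero, mul_zero] at heq
    by_cases hy : y = 0
    · subst hy
      rw [zero_pow (by norm_num), mul_zero, mul_zero, add_zero] at heq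
      have hx : x = 0 := by
        have := pow_eq_zero_iff (n := 2) (by norm_num) |>.mp heq
        exact this
      subst hx
      exact ⟨dvd_zero _, dvd_zero _, dvd_zero _⟩
    · exfalso
      have hT0 : (p : ℤ_[p]) ^ k * (B' * y ^ 2) ≠ 0 :=
        mul_ne_zero (pow_ne_zero k hp0) (mul_ne_zero hB0 (pow_ne_zero 2 hy))
      have hx : x ≠ 0 := by
        intro h
        rw [h, zero_pow (two_ne_zero), zero_add] at heq
        exact hT0 heq
      have hxe : x ^ 2 = -((p : ℤ_[p]) ^ k * (B' * y ^ 2)) :=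
        eq_neg_of_add_eq_zero_left heq
      have h1 : (x ^ 2).valuation = 2 * x.valuation := by
        rw [aux_val_pow hx]
      have h2 := congrArg PadicInt.valuation hxe
      rw [h1, aux_val_neg, hTval hy] at h2
      omega
  · -- z ≠ 0
    have hRval : (((p : ℤ_[p]) ^ ℓ) * (C' * z ^ n)).valuation = ℓ + n * z.valuation := by
      rw [PadicInt.valuation_p_pow_mul _ _ (mul_ne_zero hC0 (pow_ne_zero n hz)),
        aux_val_mul hC0 (pow_ne_zero n hz), aux_val_pow hz, hvC]
      push_cast; ring
    have hR0 : ((p : ℤ_[p]) ^ ℓ) * (C' * z ^ n) ≠ 0 :=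
      mul_ne_zero (pow_ne_zero ℓ hp0) (mul_ne_zero hC0 (pow_ne_zero n hz))
    by_cases hy : y = 0
    · -- x^2 = RHS
      subst hy
      rw [zero_pow (by norm_num), mul_zero, mul_zero, add_zero] at heq
      have hx : x ≠ 0 := by
        intro h; rw [h] at heq; exact hR0 (by rw [← heq]; norm_num)
      have h2 := congrArg PadicInt.valuation heq
      rw [aux_val_pow hx, hRval] at h2
      push_cast at h2
      -- 2 vx = ℓ + n vz, parity forces vz odd hence ≥ 1
      have hvzodd : Odd (z.valuation : ℤ) := by
        rcases Int.even_or_odd ((n : ℤ) * z.valuation) with he | ho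
        · exfalso; obtain ⟨r, hr⟩ := he; omega
        · exact (Int.odd_mul.mp ho).2
      have hvz1 : (1 : ℤ) ≤ z.valuation := by obtain ⟨t, ht⟩ := hvzodd; omega
      have hnz : (n : ℤ) ≤ (n : ℤ) * z.valuation := le_mul_of_one_le_right (by positivity) hvz1
      refine ⟨aux_dvd_of_pos (by omega), dvd_zero _, aux_dvd_of_pos (by omega)⟩
    · by_cases hx : x = 0
      · subst hx
        rw [zero_pow (by norm_num), zero_add] at heq
        have h2 := congrArg PadicInt.valuation heq
        rw [hTval hy, hRval] at h2
        have hvzeven : Even (z.valuation : ℤ) := by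
          rcases Int.even_mul.mp (⟨(b : ℤ) - c + y.valuation, by omega⟩ :
              Even ((n : ℤ) * z.valuation)) with he | he
          · exact absurd (Int.not_odd_iff_even.mpr he) (not_not.mpr hnoddZ)
          · exact he
        obtain ⟨t, ht⟩ := hvzeven
        have ht1 : 1 ≤ t := by
          by_contra h
          have hz0 : z.valuation = 0 := by omega
          rw [hz0, mul_zero] at h2; omega
        have hnz : (n : ℤ) * 2 ≤ (n : ℤ) * z.valuation := by
          apply mul_le_mul_of_nonneg_left (by omega) (by positivity)
        refine ⟨dvd_zero _, aux_dvd_of_pos (by omega), aux_dvd_of_pos (by omega)⟩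
      · -- generic case
        have hT0 : (p : ℤ_[p]) ^ k * (B' * y ^ 2) ≠ 0 :=
          mul_ne_zero (pow_ne_zero k hp0) (mul_ne_zero hB0 (pow_ne_zero 2 hy))
        have hX0 : x ^ 2 ≠ 0 := pow_ne_zero 2 hx
        have hXval : (x ^ 2).valuation = 2 * x.valuation := by
          rw [aux_val_pow hx]
        have hCge : min (2 * (x.valuation : ℤ)) ((k : ℤ) + 2 * y.valuation) ≤
            (ℓ : ℤ) + n * z.valuation := by
          have := aux_val_add (a := x ^ 2) (b := (p : ℤ_[p]) ^ k * (B' * y ^ 2))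
            (by rw [heq]; exact hR0)
          rw [heq, hRval, hXval, hTval hy] at this; omega
        have hAge : min ((ℓ : ℤ) + n * z.valuation) ((k : ℤ) + 2 * y.valuation) ≤
            2 * x.valuation := by
          have hxe : x ^ 2 = ((p : ℤ_[p]) ^ ℓ) * (C' * z ^ n) + -((p : ℤ_[p]) ^ k * (B' * y ^ 2)) := by
            rw [← heq]; ring
          have := aux_val_add (a := ((p : ℤ_[p]) ^ ℓ) * (C' * z ^ n))
            (b := -((p : ℤ_[p]) ^ k * (B' * y ^ 2))) (by rw [← hxe]; exact hX0)
          rw [← hxe, hRval, aux_val_neg, hTval hy, hXval] at this; omega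
        have hBge : min ((ℓ : ℤ) + n * z.valuation) (2 * x.valuation) ≤
            (k : ℤ) + 2 * y.valuation := by
          have hTe : (p : ℤ_[p]) ^ k * (B' * y ^ 2) = ((p : ℤ_[p]) ^ ℓ) * (C' * z ^ n) + -(x ^ 2) := by
            rw [← heq]; ring
          have := aux_val_add (a := ((p : ℤ_[p]) ^ ℓ) * (C' * z ^ n)) (b := -(x ^ 2))
            (by rw [← hTe]; exact hT0)
          rw [← hTe, hRval, aux_val_neg, hXval, hTval hy] at this; omega
        have hAB : 2 * x.valuation ≠ (k : ℤ) + 2 * y.valuation := by omega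
        rcases hAB.lt_or_gt with hlt | hlt
        · -- A < B, so C = A : ℓ + n vz = 2 vx
          have hCA : (ℓ : ℤ) + n * z.valuation = 2 * x.valuation := by omega
          have hvzodd : Odd (z.valuation : ℤ) := by
            rcases Int.even_or_odd ((n : ℤ) * z.valuation) with he | ho
            · exfalso; obtain ⟨r, hr⟩ := he; omega
            · exact (Int.odd_mul.mp ho).2
          have hvz1 : (1 : ℤ) ≤ z.valuation := by
            obtain ⟨t, ht⟩ := hvzodd; omega
          have hnz : (n : ℤ) ≤ (n : ℤ) * z.valuation := le_mul_of_one_le_right (by positivity) hvz1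
          refine ⟨aux_dvd_of_pos (by omega), aux_dvd_of_pos (by omega), aux_dvd_of_pos (by omega)⟩
        · -- B < A, so C = B : ℓ + n vz = k + 2 vy
          have hCB : (ℓ : ℤ) + n * z.valuation = (k : ℤ) + 2 * y.valuation := by omega
          have hvzeven : Even (z.valuation : ℤ) := by
            rcases Int.even_mul.mp (⟨(b : ℤ) - c + y.valuation, by omega⟩ :
                Even ((n : ℤ) * z.valuation)) with he | he
            · exact absurd (Int.not_odd_iff_even.mpr he) (not_not.mpr hnoddZ)
            · exact he
          obtain ⟨t, ht⟩ := hvzeven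
          have ht1 : 1 ≤ t := by
            by_contra h
            have hz0 : z.valuation = 0 := by omega
            rw [hz0, Nat.cast_zero, mul_zero] at hCB; omega
          have hnz : (n : ℤ) * 2 ≤ (n : ℤ) * z.valuation :=
            mul_le_mul_of_nonneg_left (by omega) (by positivity)
          refine ⟨aux_dvd_of_pos (by omega), aux_dvd_of_pos (by omega), aux_dvd_of_pos (by omega)⟩
end

section
/- Let p be an odd prime, n ≥ 3 an odd integer, and write B = p^k·B', C = p^ℓ·C' with p ∤ B'C'. If ℓ is odd, k is even, k < n + ℓ, and −B' is not a square modulo p, then there is no primitive solution (x, y, z) ∈ ℤ_p³ to x² + B·y² = C·z^n. -/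
open PadicInt

section helpers
variable {p : ℕ} [hp : Fact p.Prime]

lemma dvd_iff_toZMod_eq_zero (x : ℤ_[p]) : (p : ℤ_[p]) ∣ x ↔ PadicInt.toZMod x = 0 := by
  rw [← RingHom.mem_ker, PadicInt.ker_toZMod, PadicInt.maximalIdeal_eq_span_p,
    Ideal.mem_span_singleton]

lemma not_dvd_unitCoeff {x : ℤ_[p]} (hx : x ≠ 0) : ¬ (p : ℤ_[p]) ∣ (unitCoeff hx : ℤ_[p]) :=
  fun h => PadicInt.prime_p.not_unit (isUnit_of_dvd_unit h (unitCoeff hx).isUnit)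

lemma pow_mul_eq_pow_mul {s t : ℕ} {U V : ℤ_[p]} (hU : ¬ (p : ℤ_[p]) ∣ U)
    (hV : ¬ (p : ℤ_[p]) ∣ V) (h : (p : ℤ_[p]) ^ s * U = (p : ℤ_[p]) ^ t * V) : s = t := by
  have hp0 : (p : ℤ_[p]) ≠ 0 := PadicInt.prime_p.ne_zero
  have key : ∀ {s t : ℕ} {U V : ℤ_[p]}, ¬ (p : ℤ_[p]) ∣ U → s ≤ t →
      (p : ℤ_[p]) ^ s * U = (p : ℤ_[p]) ^ t * V → s = t := by
    intro s t U V hU hst h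
    by_contra hne
    have ht : (p : ℤ_[p]) ^ t * V = (p : ℤ_[p]) ^ s * ((p : ℤ_[p]) ^ (t - s) * V) := by
      rw [← mul_assoc, ← pow_add, Nat.add_sub_cancel' hst]
    rw [ht] at h
    have h2 := mul_left_cancel₀ (pow_ne_zero s hp0) h
    exact hU ⟨(p : ℤ_[p]) ^ (t - s - 1) * V, by
      rw [h2, ← mul_assoc, ← pow_succ']
      congr 2
      omega⟩
  rcases le_total s t with hst | hst
  · exact key hU hst h
  · exact (key hV hst h.symm).symm

lemma unit_sum_not_dvd {B' : ℤ} (hleg : legendreSym p (-B') = -1)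
    {u w : ℤ_[p]} (hu : ¬ (p : ℤ_[p]) ∣ u) (hw : ¬ (p : ℤ_[p]) ∣ w) :
    ¬ (p : ℤ_[p]) ∣ (u ^ 2 + (B' : ℤ_[p]) * w ^ 2) := by
  intro h
  have hsq := (legendreSym.eq_neg_one_iff p).mp hleg
  rw [dvd_iff_toZMod_eq_zero] at h hu hw
  simp only [map_add, map_mul, map_pow, map_intCast] at h
  set ub := PadicInt.toZMod u
  set wb := PadicInt.toZMod w
  apply hsq
  refine ⟨ub * wb⁻¹, ?_⟩
  push_cast
  field_simp
  linear_combination -h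

end helpers

/-- If `p` is an odd prime, `ℓ` is odd, `k` is even with `k < n + ℓ`, and `-B'` is a
quadratic non-residue mod `p`, then `x² + p^k B' y² = p^ℓ C' z^n` has no primitive
solution in `ℤ_[p]`. -/
theorem stmt_1 (p : ℕ) [Fact p.Prime] (hp2 : p ≠ 2) (n k ℓ : ℕ) (hn3 : 3 ≤ n)
    (hnodd : Odd n) (B' C' : ℤ) (hcop : ¬ (p : ℤ) ∣ B' * C')
    (hℓ : Odd ℓ) (hk : Even k) (hkn : k < n + ℓ)
    (hleg : legendreSym p (-B') = -1) :
    ¬ ∃ x y z : ℤ_[p],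
      x ^ 2 + ((p : ℤ_[p]) ^ k * (B' : ℤ_[p])) * y ^ 2
        = ((p : ℤ_[p]) ^ ℓ * (C' : ℤ_[p])) * z ^ n ∧
      ¬ ((p : ℤ_[p]) ∣ x ∧ (p : ℤ_[p]) ∣ y ∧ (p : ℤ_[p]) ∣ z) := by
  have hp0 : (p : ℤ_[p]) ≠ 0 := PadicInt.prime_p.ne_zero
  have hBZ : ¬ (p : ℤ) ∣ B' := fun h => hcop (h.mul_right _)
  have hCZ : ¬ (p : ℤ) ∣ C' := fun h => hcop (h.mul_left _)
  have hB : ¬ (p : ℤ_[p]) ∣ (B' : ℤ_[p]) := by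
    rw [← PadicInt.norm_lt_one_iff_dvd, PadicInt.norm_int_lt_one_iff_dvd]; exact hBZ
  have hC : ¬ (p : ℤ_[p]) ∣ (C' : ℤ_[p]) := by
    rw [← PadicInt.norm_lt_one_iff_dvd, PadicInt.norm_int_lt_one_iff_dvd]; exact hCZ
  have hl1 : 1 ≤ ℓ := by have := Nat.odd_iff.mp hℓ; omega
  rintro ⟨x, y, z, heq, hprim⟩
  apply hprim
  by_cases hxy : x = 0 ∧ y = 0
  · obtain ⟨hx0, hy0⟩ := hxy
    have hz0 : z = 0 := by
      have h0 : ((p : ℤ_[p]) ^ ℓ * (C' : ℤ_[p])) * z ^ n = 0 := by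
        rw [← heq, hx0, hy0]; ring
      rcases mul_eq_zero.mp h0 with h | h
      · exact absurd h (mul_ne_zero (pow_ne_zero _ hp0) (fun hc => hC (hc ▸ dvd_zero _)))
      · exact pow_eq_zero_iff (by omega : n ≠ 0) |>.mp h
    exact ⟨hx0 ▸ dvd_zero _, hy0 ▸ dvd_zero _, hz0 ▸ dvd_zero _⟩
  have claim : ∃ (s : ℕ) (U : ℤ_[p]), x ^ 2 + ((p : ℤ_[p]) ^ k * (B' : ℤ_[p])) * y ^ 2
      = (p : ℤ_[p]) ^ s * U ∧ ¬ (p : ℤ_[p]) ∣ U ∧ Even s ∧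
      (n + ℓ ≤ s → (p : ℤ_[p]) ∣ x ∧ (p : ℤ_[p]) ∣ y) := by
    by_cases hx0 : x = 0
    · have hy0 : y ≠ 0 := fun h => hxy ⟨hx0, h⟩
      set b := y.valuation with hb
      have hy := PadicInt.unitCoeff_spec hy0
      rw [← hb] at hy
      set w := (unitCoeff hy0 : ℤ_[p]) with hwdef
      refine ⟨k + 2 * b, (B' : ℤ_[p]) * w ^ 2, ?_, ?_, ?_, ?_⟩
      · linear_combination x * hx0 + ((p : ℤ_[p]) ^ k * (B' : ℤ_[p]) * (y + w * (p : ℤ_[p]) ^ b)) * hy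
      · exact fun h => (PadicInt.prime_p.dvd_mul.mp h).elim hB
          (fun h' => not_dvd_unitCoeff hy0 (PadicInt.prime_p.dvd_of_dvd_pow h'))
      · rcases hk with ⟨m, hm⟩; exact ⟨m + b, by omega⟩
      · intro hs
        refine ⟨hx0 ▸ dvd_zero _, ?_⟩
        rw [hy]
        exact Dvd.dvd.mul_left (dvd_pow_self _ (by omega : b ≠ 0)) _
    · by_cases hy0 : y = 0
      · set a := x.valuation with ha
        have hx := PadicInt.unitCoeff_spec hx0
        rw [← ha] at hx
        set u := (unitCoeff hx0 : ℤ_[p]) with hudef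
        refine ⟨2 * a, u ^ 2, ?_, ?_, ⟨a, by omega⟩, ?_⟩
        · linear_combination (x + u * (p : ℤ_[p]) ^ a) * hx
            + ((p : ℤ_[p]) ^ k * (B' : ℤ_[p]) * y) * hy0
        · exact fun h => not_dvd_unitCoeff hx0 (PadicInt.prime_p.dvd_of_dvd_pow h)
        · intro hs
          refine ⟨?_, hy0 ▸ dvd_zero _⟩
          rw [hx]
          exact Dvd.dvd.mul_left (dvd_pow_self _ (by omega : a ≠ 0)) _
      · set a := x.valuation with ha
        set b := y.valuation with hb
        have hx := PadicInt.unitCoeff_spec hx0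
        have hy := PadicInt.unitCoeff_spec hy0
        rw [← ha] at hx
        rw [← hb] at hy
        set u := (unitCoeff hx0 : ℤ_[p]) with hudef
        set w := (unitCoeff hy0 : ℤ_[p]) with hwdef
        have hu : ¬ (p : ℤ_[p]) ∣ u := not_dvd_unitCoeff hx0
        have hw : ¬ (p : ℤ_[p]) ∣ w := not_dvd_unitCoeff hy0
        have hxdvd : 1 ≤ a → (p : ℤ_[p]) ∣ x := fun h1 => by
          rw [hx]; exact Dvd.dvd.mul_left (dvd_pow_self _ (by omega : a ≠ 0)) _
        have hydvd : 1 ≤ b → (p : ℤ_[p]) ∣ y := fun h1 => by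
          rw [hy]; exact Dvd.dvd.mul_left (dvd_pow_self _ (by omega : b ≠ 0)) _
        rcases lt_trichotomy (2 * a) (k + 2 * b) with hcmp | hcmp | hcmp
        · obtain ⟨d, hd, hd1⟩ : ∃ d, k + 2 * b = 2 * a + d ∧ 1 ≤ d := ⟨k + 2 * b - 2 * a, by omega, by omega⟩
          have hpow : (p : ℤ_[p]) ^ (k + 2 * b) = (p : ℤ_[p]) ^ (2 * a) * (p : ℤ_[p]) ^ d := by
            rw [hd, pow_add]
          refine ⟨2 * a, u ^ 2 + (p : ℤ_[p]) ^ d * ((B' : ℤ_[p]) * w ^ 2), ?_, ?_, ⟨a, by omega⟩, ?_⟩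
          · linear_combination (x + u * (p : ℤ_[p]) ^ a) * hx
              + ((B' : ℤ_[p]) * (p : ℤ_[p]) ^ k * (y + w * (p : ℤ_[p]) ^ b)) * hy
              + ((B' : ℤ_[p]) * w ^ 2) * hpow
          · intro h
            have h2 : (p : ℤ_[p]) ∣ (p : ℤ_[p]) ^ d * ((B' : ℤ_[p]) * w ^ 2) :=
              Dvd.dvd.mul_right (dvd_pow_self _ (by omega : d ≠ 0)) _
            have h3 : (p : ℤ_[p]) ∣ u ^ 2 := by
              have h4 := dvd_sub h h2
              simpa using h4
            exact hu (PadicInt.prime_p.dvd_of_dvd_pow h3)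
          · intro hs
            exact ⟨hxdvd (by omega), hydvd (by omega)⟩
        · have hpow : (p : ℤ_[p]) ^ (k + 2 * b) = (p : ℤ_[p]) ^ (2 * a) := by rw [hcmp]
          refine ⟨2 * a, u ^ 2 + (B' : ℤ_[p]) * w ^ 2, ?_, unit_sum_not_dvd hleg hu hw,
            ⟨a, by omega⟩, ?_⟩
          · linear_combination (x + u * (p : ℤ_[p]) ^ a) * hx
              + ((B' : ℤ_[p]) * (p : ℤ_[p]) ^ k * (y + w * (p : ℤ_[p]) ^ b)) * hy
              + ((B' : ℤ_[p]) * w ^ 2) * hpow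
          · intro hs
            exact ⟨hxdvd (by omega), hydvd (by omega)⟩
        · obtain ⟨d, hd, hd1⟩ : ∃ d, 2 * a = k + 2 * b + d ∧ 1 ≤ d := ⟨2 * a - (k + 2 * b), by omega, by omega⟩
          have hpow : (p : ℤ_[p]) ^ (2 * a) = (p : ℤ_[p]) ^ (k + 2 * b) * (p : ℤ_[p]) ^ d := by
            rw [hd, pow_add]
          refine ⟨k + 2 * b, (p : ℤ_[p]) ^ d * u ^ 2 + (B' : ℤ_[p]) * w ^ 2, ?_, ?_, ?_, ?_⟩
          · linear_combination (x + u * (p : ℤ_[p]) ^ a) * hx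
              + ((B' : ℤ_[p]) * (p : ℤ_[p]) ^ k * (y + w * (p : ℤ_[p]) ^ b)) * hy
              + u ^ 2 * hpow
          · intro h
            have h2 : (p : ℤ_[p]) ∣ (p : ℤ_[p]) ^ d * u ^ 2 :=
              Dvd.dvd.mul_right (dvd_pow_self _ (by omega : d ≠ 0)) _
            have h3 : (p : ℤ_[p]) ∣ (B' : ℤ_[p]) * w ^ 2 := by
              have h4 := dvd_sub h h2
              simpa using h4
            exact (PadicInt.prime_p.dvd_mul.mp h3).elim hB
              (fun h' => hw (PadicInt.prime_p.dvd_of_dvd_pow h'))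
          · rcases hk with ⟨m, hm⟩; exact ⟨m + b, by omega⟩
          · intro hs
            exact ⟨hxdvd (by omega), hydvd (by omega)⟩
  obtain ⟨s, U, hL, hU, hse, himp⟩ := claim
  rw [hL] at heq
  have hz0 : z ≠ 0 := by
    intro h
    rw [h, zero_pow (by omega : n ≠ 0), mul_zero] at heq
    rcases mul_eq_zero.mp heq with h' | h'
    · exact pow_ne_zero _ hp0 h'
    · exact hU (h' ▸ dvd_zero _)
  set c := z.valuation with hc
  have hz := PadicInt.unitCoeff_spec hz0
  rw [← hc] at hz
  set wz := (unitCoeff hz0 : ℤ_[p]) with hwz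
  have hwzd : ¬ (p : ℤ_[p]) ∣ wz := not_dvd_unitCoeff hz0
  have heq2 : (p : ℤ_[p]) ^ s * U = (p : ℤ_[p]) ^ (ℓ + n * c) * ((C' : ℤ_[p]) * wz ^ n) := by
    rw [heq, hz, mul_pow, ← pow_mul, pow_add, pow_mul']
    ring
  have hCwz : ¬ (p : ℤ_[p]) ∣ ((C' : ℤ_[p]) * wz ^ n) := fun h =>
    (PadicInt.prime_p.dvd_mul.mp h).elim hC
      (fun h' => hwzd (PadicInt.prime_p.dvd_of_dvd_pow h'))
  have hst : s = ℓ + n * c := pow_mul_eq_pow_mul hU hCwz heq2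
  have hcodd : Odd c := by
    by_contra hce
    rw [Nat.not_odd_iff_even] at hce
    have hodd : Odd (ℓ + n * c) := hℓ.add_even (hce.mul_left n)
    rw [← hst] at hodd
    exact (Nat.not_odd_iff_even.mpr hse) hodd
  have hc1 : 1 ≤ c := by have := Nat.odd_iff.mp hcodd; omega
  have hs : n + ℓ ≤ s := by
    rw [hst]
    have := Nat.mul_le_mul_left n hc1
    omega
  obtain ⟨hxd, hyd⟩ := himp hs
  refine ⟨hxd, hyd, ?_⟩
  rw [hz]
  exact Dvd.dvd.mul_left (dvd_pow_self _ (by omega : c ≠ 0)) _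
end

section
/- Let n ≥ 3 be an odd integer, ℓ an odd positive integer, and let B', C' be odd integers with B' ≡ 3 (mod 8). Then there is no primitive solution (x, y, z) ∈ ℤ₂³ to x² + B'·y² = 2^ℓ·C'·z^n. -/
open PadicInt

private noncomputable abbrev T : ℤ_[2] →+* ZMod 8 :=
  (PadicInt.toZModPow 3 : ℤ_[2] →+* ZMod (2 ^ 3))

private instance zmod8DecDvd (a b : ZMod 8) : Decidable (a ∣ b) :=
  decidable_of_iff (∃ c : ZMod 8, b = a * c) Iff.rfl

private lemma hT2 : T (2 : ℤ_[2]) = 2 := map_ofNat T 2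

private lemma two_dvd_iff (w : ℤ_[2]) : (2 : ℤ_[2]) ∣ w ↔ (2 : ZMod 8) ∣ T w := by
  constructor
  · intro h
    have : T (2 : ℤ_[2]) ∣ T w := map_dvd _ h
    rwa [hT2] at this
  · rintro ⟨c, hc⟩
    obtain ⟨m, hm⟩ : ∃ m : ℕ, (m : ZMod 8) = c :=
      ⟨c.val, by simp [ZMod.natCast_val, ZMod.cast_id]⟩
    have hker : w - 2 * (m : ℤ_[2]) ∈ RingHom.ker (T : ℤ_[2] →+* ZMod 8) := by
      rw [RingHom.mem_ker, map_sub, map_mul, map_natCast, hT2, hm, hc]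
      ring
    rw [PadicInt.ker_toZModPow, Ideal.mem_span_singleton] at hker
    obtain ⟨s, hs⟩ := hker
    refine ⟨(m : ℤ_[2]) + 4 * s, ?_⟩
    have h2 : ((2 : ℕ) : ℤ_[2]) = 2 := by norm_num
    rw [h2] at hs
    linear_combination hs

private lemma odd_int_not_dvd {m : ℤ} (hm : Odd m) : ¬ (2 : ℤ_[2]) ∣ (m : ℤ_[2]) := by
  rw [two_dvd_iff]
  intro h
  have hT : T ((m : ℤ) : ℤ_[2]) = (m : ZMod 8) := map_intCast _ _
  obtain ⟨k, hk⟩ := hm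
  rw [hT, hk] at h
  push_cast at h
  obtain ⟨c, hc⟩ := h
  have h1 : (2 : ZMod 8) ∣ 1 := ⟨c - k, by linear_combination hc⟩
  revert h1; decide

private lemma cube_even (c : ZMod 8) (h : (2 : ZMod 8) ∣ c) : c ^ 3 = 0 := by
  revert h; revert c; decide

private lemma key8 (a b c : ZMod 8) (hab : ¬ (2 : ZMod 8) ∣ a ∨ ¬ (2 : ZMod 8) ∣ b)
    (hc : ¬ (2 : ZMod 8) ∣ c) : a ^ 2 + 3 * b ^ 2 ≠ 2 * c := by
  revert hab hc; revert a b c; decide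

private lemma key8' (a b : ZMod 8) (hab : ¬ (2 : ZMod 8) ∣ a ∨ ¬ (2 : ZMod 8) ∣ b) :
    a ^ 2 + 3 * b ^ 2 ≠ 0 := by
  revert hab; revert a b; decide

private lemma mod8_contra (B' : ℤ) (hB' : ((B' : ℤ) : ZMod 8) = 3) (k : ℕ)
    (x y u : ℤ_[2]) (hxy : ¬ (2 : ℤ_[2]) ∣ x ∨ ¬ (2 : ℤ_[2]) ∣ y)
    (hu : ¬ (2 : ℤ_[2]) ∣ u) :
    x ^ 2 + (B' : ℤ_[2]) * y ^ 2 ≠ 2 ^ (2 * k + 1) * u := by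
  intro heq
  have h := congrArg T heq
  rw [map_add, map_mul, map_mul, map_pow, map_pow, map_pow, map_intCast, hB', hT2] at h
  have hab : ¬ (2 : ZMod 8) ∣ T x ∨ ¬ (2 : ZMod 8) ∣ T y :=
    hxy.imp (fun h h' => h ((two_dvd_iff x).2 h')) (fun h h' => h ((two_dvd_iff y).2 h'))
  cases k with
  | zero =>
    exact key8 (T x) (T y) (T u) hab (fun h' => hu ((two_dvd_iff u).2 h'))
      (by simpa using h)
  | succ k =>
    have h0 : (2 : ZMod 8) ^ (2 * (k + 1) + 1) = 0 := by
      have he : (2 : ZMod 8) ^ (2 * (k + 1) + 1) = 2 ^ 3 * 2 ^ (2 * k) := by ring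
      rw [he, show ((2:ZMod 8)^3) = 0 from by decide, zero_mul]
    rw [h0, zero_mul] at h
    exact key8' (T x) (T y) hab h

private lemma descent (B' : ℤ) (hB' : ((B' : ℤ) : ZMod 8) = 3) :
    ∀ k : ℕ, ∀ x y u : ℤ_[2], ¬ (2 : ℤ_[2]) ∣ u →
      x ^ 2 + (B' : ℤ_[2]) * y ^ 2 ≠ 2 ^ (2 * k + 1) * u := by
  intro k
  induction k with
  | zero =>
    intro x y u hu heq
    by_cases hx : (2 : ℤ_[2]) ∣ x
    · by_cases hy : (2 : ℤ_[2]) ∣ y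
      · obtain ⟨a, ha⟩ := hx; obtain ⟨b, hb⟩ := hy
        rw [ha, hb] at heq
        have h1 : (2 : ℤ_[2]) * (2 * a ^ 2 + 2 * (B' : ℤ_[2]) * b ^ 2) = 2 * u := by
          linear_combination heq
        have h2 := mul_left_cancel₀ (two_ne_zero (α := ℤ_[2])) h1
        exact hu ⟨a ^ 2 + (B' : ℤ_[2]) * b ^ 2, by linear_combination -h2⟩
      · exact mod8_contra B' hB' 0 x y u (Or.inr hy) hu heq
    · exact mod8_contra B' hB' 0 x y u (Or.inl hx) hu heq
  | succ k ih =>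
    intro x y u hu heq
    by_cases hx : (2 : ℤ_[2]) ∣ x
    · by_cases hy : (2 : ℤ_[2]) ∣ y
      · obtain ⟨a, ha⟩ := hx; obtain ⟨b, hb⟩ := hy
        rw [ha, hb] at heq
        apply ih a b u hu
        have h4 : (4 : ℤ_[2]) ≠ 0 := by norm_num
        apply mul_left_cancel₀ h4
        have he : (2 : ℤ_[2]) ^ (2 * (k + 1) + 1) = 4 * 2 ^ (2 * k + 1) := by ring
        rw [he] at heq
        linear_combination heq
      · exact mod8_contra B' hB' (k + 1) x y u (Or.inr hy) hu heq
    · exact mod8_contra B' hB' (k + 1) x y u (Or.inl hx) hu heq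

/-- For `ℓ` odd and positive and odd integers `B' ≡ 3 (mod 8)` and `C'`, the equation
`x² + B' y² = 2^ℓ C' z^n` has no primitive solution in `ℤ₂`. -/
theorem stmt_2 (n ℓ : ℕ) (hn3 : 3 ≤ n) (hnodd : Odd n) (hℓpos : 0 < ℓ) (hℓ : Odd ℓ)
    (B' C' : ℤ) (hB'odd : Odd B') (hC'odd : Odd C') (hB' : B' ≡ 3 [ZMOD 8]) :
    ¬ ∃ x y z : ℤ_[2],
      x ^ 2 + (B' : ℤ_[2]) * y ^ 2 = (2 : ℤ_[2]) ^ ℓ * (C' : ℤ_[2]) * z ^ n ∧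
      ¬ ((2 : ℤ_[2]) ∣ x ∧ (2 : ℤ_[2]) ∣ y ∧ (2 : ℤ_[2]) ∣ z) := by
  have hB8 : ((B' : ℤ) : ZMod 8) = 3 := by
    have := (ZMod.intCast_eq_intCast_iff B' 3 8).mpr hB'
    simpa using this
  rintro ⟨x, y, z, heq, hprim⟩
  by_cases hz : (2 : ℤ_[2]) ∣ z
  · have hxy : ¬ (2 : ℤ_[2]) ∣ x ∨ ¬ (2 : ℤ_[2]) ∣ y := by
      by_contra h
      push_neg at h
      exact hprim ⟨h.1, h.2, hz⟩
    apply key8' (T x) (T y)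
      (hxy.imp (fun h h' => h ((two_dvd_iff x).2 h')) (fun h h' => h ((two_dvd_iff y).2 h')))
    have hRHS : T ((2 : ℤ_[2]) ^ ℓ * (C' : ℤ_[2]) * z ^ n) = 0 := by
      obtain ⟨m, hm⟩ := Nat.exists_eq_add_of_le hn3
      rw [map_mul, map_mul, map_pow]
      have hc : T (z ^ n) = 0 := by
        rw [map_pow, hm, pow_add, cube_even (T z) ((two_dvd_iff z).1 hz), zero_mul]
      rw [hc, mul_zero]
    calc T x ^ 2 + 3 * T y ^ 2
        = T (x ^ 2 + (B' : ℤ_[2]) * y ^ 2) := by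
          rw [map_add, map_mul, map_pow, map_pow, map_intCast, hB8]
      _ = 0 := by rw [heq, hRHS]
  · obtain ⟨k, hk⟩ := hℓ
    have hu : ¬ (2 : ℤ_[2]) ∣ (C' : ℤ_[2]) * z ^ n := by
      intro h
      rcases (PadicInt.prime_p (p := 2)).2.2 _ _ (by exact_mod_cast h) with h' | h'
      · exact odd_int_not_dvd hC'odd (by exact_mod_cast h')
      · exact hz ((PadicInt.prime_p (p := 2)).dvd_of_dvd_pow (by exact_mod_cast h'))
    apply descent B' hB8 k x y ((C' : ℤ_[2]) * z ^ n) hu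
    rw [heq, hk, mul_assoc]
end

section
/- Let R be a principal ideal domain, p ∈ R a prime element, n ≥ 3 odd, and B, C ∈ R with p² ∣ B and p² ∣ C. Then the map (x, y, z) ↦ (x/p, y, z) gives a bijection between the set of primitive solutions in R³ of x² + B·y² = C·z^n and the set of primitive solutions in R³ of x² + (B/p²)·y² = (C/p²)·z^n. -/
/-- In a PID `R` with prime `p` and `B = p² B₀`, `C = p² C₀`, the map
`(x, y, z) ↦ (x/p, y, z)` is a bijection between primitive solutions of
`x² + B y² = C zⁿ` and primitive solutions of `x² + B₀ y² = C₀ zⁿ`. -/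
theorem stmt_6 {R : Type*} [CommRing R] [IsDomain R] [IsPrincipalIdealRing R]
    (p : R) (hp : Prime p) (n : ℕ) (hn3 : 3 ≤ n) (hnodd : Odd n)
    (B C B₀ C₀ : R) (hB : B = p ^ 2 * B₀) (hC : C = p ^ 2 * C₀) :
    ∃ e : {t : R × R × R // t.1 ^ 2 + B * t.2.1 ^ 2 = C * t.2.2 ^ n ∧
            Ideal.span {t.1, t.2.1, t.2.2} = ⊤} ≃
          {t : R × R × R // t.1 ^ 2 + B₀ * t.2.1 ^ 2 = C₀ * t.2.2 ^ n ∧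
            Ideal.span {t.1, t.2.1, t.2.2} = ⊤},
      ∀ t : {t : R × R × R // t.1 ^ 2 + B * t.2.1 ^ 2 = C * t.2.2 ^ n ∧
              Ideal.span {t.1, t.2.1, t.2.2} = ⊤},
        t.val.1 = p * (e t).val.1 ∧ (e t).val.2 = t.val.2 := by
  subst hB hC
  have hp0 : p ≠ 0 := hp.ne_zero
  have hn0 : 0 < n := by omega
  have heqg : ∀ x y z : R, x ^ 2 + B₀ * y ^ 2 = C₀ * z ^ n →
      (p * x) ^ 2 + p ^ 2 * B₀ * y ^ 2 = p ^ 2 * C₀ * z ^ n := by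
    intro x y z heq
    linear_combination (p ^ 2) * heq
  have hspang : ∀ x y z : R, x ^ 2 + B₀ * y ^ 2 = C₀ * z ^ n →
      Ideal.span {x, y, z} = ⊤ → Ideal.span {p * x, y, z} = ⊤ := by
    intro x y z heq hspan
    by_contra h
    obtain ⟨m, hm, hle⟩ := Ideal.exists_le_maximal _ h
    have hy : y ∈ m := hle (Ideal.subset_span (by simp))
    have hz : z ∈ m := hle (Ideal.subset_span (by simp))
    have hx2 : x ^ 2 ∈ m := by
      have hx : x ^ 2 = C₀ * z ^ n - B₀ * y ^ 2 := by linear_combination heq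
      rw [hx]
      exact Ideal.sub_mem _ (Ideal.mul_mem_left _ _ (Ideal.pow_mem_of_mem _ hz n hn0))
        (Ideal.mul_mem_left _ _ (Ideal.pow_mem_of_mem _ hy 2 (by norm_num)))
    have hx : x ∈ m := hm.isPrime.mem_of_pow_mem 2 hx2
    have : Ideal.span {x, y, z} ≤ m := by
      rw [Ideal.span_le]
      intro a ha
      simp only [Set.mem_insert_iff, Set.mem_singleton_iff] at ha
      rcases ha with rfl | rfl | rfl <;> assumption
    exact hm.ne_top (top_le_iff.mp (hspan ▸ this))
  let g : {t : R × R × R // t.1 ^ 2 + B₀ * t.2.1 ^ 2 = C₀ * t.2.2 ^ n ∧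
            Ideal.span {t.1, t.2.1, t.2.2} = ⊤} →
      {t : R × R × R // t.1 ^ 2 + p ^ 2 * B₀ * t.2.1 ^ 2 = p ^ 2 * C₀ * t.2.2 ^ n ∧
            Ideal.span {t.1, t.2.1, t.2.2} = ⊤} :=
    fun s => ⟨(p * s.val.1, s.val.2.1, s.val.2.2),
      heqg _ _ _ s.prop.1, hspang _ _ _ s.prop.1 s.prop.2⟩
  have hginj : Function.Injective g := by
    rintro ⟨⟨x, y, z⟩, h1, h2⟩ ⟨⟨x', y', z'⟩, h1', h2'⟩ hgg
    have h3 : ((p * x, y, z) : R × R × R) = (p * x', y', z') := congrArg Subtype.val hgg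
    simp only [Prod.mk.injEq] at h3
    obtain ⟨hx, hy, hz⟩ := h3
    exact Subtype.ext (by simp [mul_left_cancel₀ hp0 hx, hy, hz])
  have hgsurj : Function.Surjective g := by
    rintro ⟨⟨x, y, z⟩, heq, hspan⟩
    simp only at heq hspan
    have hdvd : p ∣ x := by
      refine hp.dvd_of_dvd_pow (n := 2) ⟨p * C₀ * z ^ n - p * B₀ * y ^ 2, ?_⟩
      linear_combination heq
    obtain ⟨x', rfl⟩ := hdvd
    have heq' : x' ^ 2 + B₀ * y ^ 2 = C₀ * z ^ n := by
      have h2 : p ^ 2 * (x' ^ 2 + B₀ * y ^ 2) = p ^ 2 * (C₀ * z ^ n) := by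
        linear_combination heq
      exact mul_left_cancel₀ (pow_ne_zero 2 hp0) h2
    have hspan' : Ideal.span {x', y, z} = ⊤ := by
      refine top_le_iff.mp (hspan ▸ Ideal.span_le.mpr ?_)
      intro a ha
      simp only [Set.mem_insert_iff, Set.mem_singleton_iff] at ha
      rcases ha with rfl | rfl | rfl
      · exact Ideal.mul_mem_left _ p (Ideal.subset_span (by simp))
      · exact Ideal.subset_span (by simp)
      · exact Ideal.subset_span (by simp)
    exact ⟨⟨(x', y, z), heq', hspan'⟩, rfl⟩
  refine ⟨(Equiv.ofBijective g ⟨hginj, hgsurj⟩).symm, fun t => ?_⟩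
  have ht : g ((Equiv.ofBijective g ⟨hginj, hgsurj⟩).symm t) = t :=
    (Equiv.ofBijective g ⟨hginj, hgsurj⟩).apply_symm_apply t
  have hval : (g ((Equiv.ofBijective g ⟨hginj, hgsurj⟩).symm t)).val = t.val :=
    congrArg Subtype.val ht
  constructor
  · rw [← hval]
  · rw [← hval]
end

section
/- Let p be a prime, n ≥ 3 odd, k an even integer with 1 < k < n + 1, and B', C' ∈ ℤ_p units. If (x, y, z) ∈ ℤ_p³ is a primitive solution of x² + p^k·B'·y² = p·C'·z^n, then p^{k/2} ∣ x, p ∣ z, and the triple (x/p^{k/2}, y, z/p) satisfies x'² + B'·y'² = p^{n+1−k}·C'·z'^n. -/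
private lemma aux_descent (p : ℕ) [Fact p.Prime] (B C y w : ℤ_[p]) (n : ℕ) :
    ∀ a, ∀ b x : _, a ≤ b → Even a →
      x ^ 2 + (p : ℤ_[p]) ^ a * B * y ^ 2 = (p : ℤ_[p]) ^ b * C * w ^ n →
      ∃ x' : ℤ_[p], x = (p : ℤ_[p]) ^ (a / 2) * x' ∧
        x' ^ 2 + B * y ^ 2 = (p : ℤ_[p]) ^ (b - a) * C * w ^ n := by
  have hp : Prime (p : ℤ_[p]) := PadicInt.prime_p
  have hp0 : (p : ℤ_[p]) ≠ 0 := hp.ne_zero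
  intro a
  induction a using Nat.strong_induction_on with
  | _ a ih =>
    intro b x hab hae heq
    rcases Nat.eq_zero_or_pos a with rfl | hapos
    · exact ⟨x, by simp, by simpa using heq⟩
    · have ha2 : 2 ≤ a := by rcases hae with ⟨m, hm⟩; omega
      have hb2 : 2 ≤ b := le_trans ha2 hab
      have hpx : (p : ℤ_[p]) ∣ x := by
        apply hp.dvd_of_dvd_pow (n := 2)
        have : x ^ 2 = (p : ℤ_[p]) ^ b * C * w ^ n - (p : ℤ_[p]) ^ a * B * y ^ 2 := by
          linear_combination heq
        rw [this]
        exact dvd_sub (((dvd_pow_self _ (by omega : b ≠ 0)).mul_right _).mul_right _)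
          (((dvd_pow_self _ (by omega : a ≠ 0)).mul_right _).mul_right _)
      obtain ⟨x₁, rfl⟩ := hpx
      have hexp_a : (p : ℤ_[p]) ^ a = (p : ℤ_[p]) ^ 2 * (p : ℤ_[p]) ^ (a - 2) := by
        rw [← pow_add]; congr 1; omega
      have hexp_b : (p : ℤ_[p]) ^ b = (p : ℤ_[p]) ^ 2 * (p : ℤ_[p]) ^ (b - 2) := by
        rw [← pow_add]; congr 1; omega
      have heq2 : x₁ ^ 2 + (p : ℤ_[p]) ^ (a - 2) * B * y ^ 2
          = (p : ℤ_[p]) ^ (b - 2) * C * w ^ n := by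
        apply mul_left_cancel₀ (pow_ne_zero 2 hp0)
        rw [hexp_a, hexp_b] at heq
        linear_combination heq
      obtain ⟨x', hx', heq'⟩ := ih (a - 2) (by omega) (b - 2) x₁ (by omega)
        (by rcases hae with ⟨m, hm⟩; exact ⟨m - 1, by omega⟩) heq2
      refine ⟨x', ?_, ?_⟩
      · rw [hx', ← mul_assoc, ← pow_succ']
        congr 2
        omega
      · rw [show b - a = b - 2 - (a - 2) from by omega]
        exact heq'

/-- For `k` even with `1 < k < n + 1` and units `B', C' ∈ ℤ_[p]`, a primitive solution
of `x² + p^k B' y² = p C' z^n` satisfies `p^(k/2) ∣ x`, `p ∣ z`, and the reduced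
triple satisfies `x'² + B' y² = p^(n+1-k) C' z'^n`. -/
theorem stmt_7 (p : ℕ) [Fact p.Prime] (n k : ℕ) (hn3 : 3 ≤ n) (hnodd : Odd n)
    (hkeven : Even k) (hk1 : 1 < k) (hkn : k < n + 1)
    (B' C' : ℤ_[p]) (hB' : IsUnit B') (hC' : IsUnit C')
    (x y z : ℤ_[p])
    (heq : x ^ 2 + ((p : ℤ_[p]) ^ k * B') * y ^ 2 = (p : ℤ_[p]) * C' * z ^ n)
    (hprim : ¬ ((p : ℤ_[p]) ∣ x ∧ (p : ℤ_[p]) ∣ y ∧ (p : ℤ_[p]) ∣ z)) :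
    ∃ x' z' : ℤ_[p], x = (p : ℤ_[p]) ^ (k / 2) * x' ∧ z = (p : ℤ_[p]) * z' ∧
      x' ^ 2 + B' * y ^ 2 = (p : ℤ_[p]) ^ (n + 1 - k) * C' * z' ^ n := by
  have hp : Prime (p : ℤ_[p]) := PadicInt.prime_p
  have hp0 : (p : ℤ_[p]) ≠ 0 := hp.ne_zero
  have hk2 : 2 ≤ k := hk1
  -- p ∣ x
  have hpx : (p : ℤ_[p]) ∣ x := by
    apply hp.dvd_of_dvd_pow (n := 2)
    have : x ^ 2 = (p : ℤ_[p]) * C' * z ^ n - (p : ℤ_[p]) ^ k * B' * y ^ 2 := by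
      linear_combination heq
    rw [this]
    exact dvd_sub ((dvd_rfl.mul_right _).mul_right _)
      (((dvd_pow_self _ (by omega : k ≠ 0)).mul_right _).mul_right _)
  obtain ⟨x₁, rfl⟩ := hpx
  -- p ∣ z
  have hpz : (p : ℤ_[p]) ∣ z := by
    apply hp.dvd_of_dvd_pow (n := n)
    have hdvd : (p : ℤ_[p]) ^ 2 ∣ (p : ℤ_[p]) * C' * z ^ n := by
      rw [← heq]
      apply dvd_add
      · rw [mul_pow]; exact Dvd.dvd.mul_right dvd_rfl _
      · exact ((pow_dvd_pow _ hk2).mul_right _).mul_right _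
    have h2 : (p : ℤ_[p]) ∣ C' * z ^ n := by
      rcases hdvd with ⟨c, hc⟩
      exact ⟨c, mul_left_cancel₀ hp0 (by linear_combination hc)⟩
    rcases hC'.exists_left_inv with ⟨u, hu⟩
    have := h2.mul_left u
    rwa [show u * (C' * z ^ n) = (u * C') * z ^ n by ring, hu, one_mul] at this
  obtain ⟨z₁, rfl⟩ := hpz
  -- divide by p^2
  have hpow : (p : ℤ_[p]) * (p : ℤ_[p]) ^ n = (p : ℤ_[p]) ^ 2 * (p : ℤ_[p]) ^ (n - 1) := by
    rw [← pow_succ', ← pow_add]; congr 1; omega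
  have hexp_k : (p : ℤ_[p]) ^ k = (p : ℤ_[p]) ^ 2 * (p : ℤ_[p]) ^ (k - 2) := by
    rw [← pow_add]; congr 1; omega
  have heq2 : x₁ ^ 2 + (p : ℤ_[p]) ^ (k - 2) * B' * y ^ 2
      = (p : ℤ_[p]) ^ (n - 1) * C' * z₁ ^ n := by
    apply mul_left_cancel₀ (pow_ne_zero 2 hp0)
    rw [hexp_k, mul_pow (p : ℤ_[p]) z₁ n] at heq
    linear_combination heq + C' * z₁ ^ n * hpow
  obtain ⟨x', hx', heq'⟩ := aux_descent p B' C' y z₁ n (k - 2) (n - 1) x₁ (by omega)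
    (by rcases hkeven with ⟨m, hm⟩; exact ⟨m - 1, by omega⟩) heq2
  refine ⟨x', z₁, ?_, rfl, ?_⟩
  · rw [hx', ← mul_assoc, ← pow_succ']
    congr 2
    omega
  · rw [show n + 1 - k = n - 1 - (k - 2) from by omega]
    exact heq'
end

section
/- Every primitive integer solution (x, y, z) of x² + 3·y² = 31·z³ satisfies 3 ∣ y. -/
/-- Eisenstein integers `a + b ω`, `ω = e^{2πi/3}`, `ω² = -1 - ω`. -/
@[ext]
structure Eis : Type where
  re : ℤ
  im : ℤ
  deriving DecidableEq

namespace Eis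

instance : Zero Eis := ⟨⟨0, 0⟩⟩
instance : One Eis := ⟨⟨1, 0⟩⟩
instance : Add Eis := ⟨fun z w => ⟨z.re + w.re, z.im + w.im⟩⟩
instance : Neg Eis := ⟨fun z => ⟨-z.re, -z.im⟩⟩
instance : Mul Eis := ⟨fun z w => ⟨z.re * w.re - z.im * w.im,
  z.re * w.im + z.im * w.re - z.im * w.im⟩⟩

@[simp] theorem zero_re : (0 : Eis).re = 0 := rfl
@[simp] theorem zero_im : (0 : Eis).im = 0 := rfl
@[simp] theorem one_re : (1 : Eis).re = 1 := rfl
@[simp] theorem one_im : (1 : Eis).im = 0 := rfl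
@[simp] theorem add_re (z w : Eis) : (z + w).re = z.re + w.re := rfl
@[simp] theorem add_im (z w : Eis) : (z + w).im = z.im + w.im := rfl
@[simp] theorem neg_re (z : Eis) : (-z).re = -z.re := rfl
@[simp] theorem neg_im (z : Eis) : (-z).im = -z.im := rfl
@[simp] theorem mul_re (z w : Eis) : (z * w).re = z.re * w.re - z.im * w.im := rfl
@[simp] theorem mul_im (z w : Eis) :
    (z * w).im = z.re * w.im + z.im * w.re - z.im * w.im := rfl

instance addCommGroup : AddCommGroup Eis := by
  refine
  { add := (· + ·)
    zero := (0 : Eis)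
    sub := fun a b => a + -b
    neg := Neg.neg
    nsmul := @nsmulRec Eis ⟨0⟩ ⟨(· + ·)⟩
    zsmul := @zsmulRec Eis ⟨0⟩ ⟨(· + ·)⟩ ⟨Neg.neg⟩ (@nsmulRec Eis ⟨0⟩ ⟨(· + ·)⟩)
    add_assoc := ?_
    zero_add := ?_
    add_zero := ?_
    neg_add_cancel := ?_
    add_comm := ?_ } <;>
  intros <;> ext <;> simp <;> ring

@[simp] theorem sub_re (z w : Eis) : (z - w).re = z.re - w.re := rfl
@[simp] theorem sub_im (z w : Eis) : (z - w).im = z.im - w.im := rfl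

instance addGroupWithOne : AddGroupWithOne Eis :=
  { Eis.addCommGroup with
    natCast := fun n => ⟨n, 0⟩
    intCast := fun n => ⟨n, 0⟩
    one := 1 }

instance commRing : CommRing Eis := by
  refine
  { Eis.addGroupWithOne with
    mul := (· * ·)
    npow := @npowRec Eis ⟨1⟩ ⟨(· * ·)⟩,
    add_comm := ?_
    left_distrib := ?_
    right_distrib := ?_
    zero_mul := ?_
    mul_zero := ?_
    mul_assoc := ?_
    one_mul := ?_
    mul_one := ?_
    mul_comm := ?_ } <;>
  intros <;> ext <;> simp <;> ring

@[simp] theorem intCast_re (n : ℤ) : (n : Eis).re = n := rfl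
@[simp] theorem intCast_im (n : ℤ) : (n : Eis).im = 0 := rfl
@[simp] theorem natCast_re (n : ℕ) : (n : Eis).re = n := rfl
@[simp] theorem natCast_im (n : ℕ) : (n : Eis).im = 0 := rfl

/-- The norm `a² - ab + b²`. -/
def nrm (z : Eis) : ℤ := z.re ^ 2 - z.re * z.im + z.im ^ 2

theorem nrm_mul (z w : Eis) : nrm (z * w) = nrm z * nrm w := by
  simp [nrm]; ring

theorem nrm_nonneg (z : Eis) : 0 ≤ nrm z := by
  have : 4 * nrm z = (2 * z.re - z.im) ^ 2 + 3 * z.im ^ 2 := by simp [nrm]; ring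
  nlinarith [sq_nonneg (2 * z.re - z.im), sq_nonneg z.im]

theorem nrm_eq_zero_iff {z : Eis} : nrm z = 0 ↔ z = 0 := by
  constructor
  · intro h
    have h4 : (2 * z.re - z.im) ^ 2 + 3 * z.im ^ 2 = 0 := by simp [nrm] at h ⊢; nlinarith [h]
    have h5 : z.im = 0 := by nlinarith [sq_nonneg (2 * z.re - z.im), sq_nonneg z.im]
    have h6 : z.re = 0 := by nlinarith [sq_nonneg (2 * z.re - z.im), sq_nonneg z.im]
    ext <;> simp [h5, h6]
  · rintro rfl; simp [nrm]

instance : Nontrivial Eis :=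
  ⟨0, 1, fun h => by simpa using congrArg Eis.re h⟩

instance : NoZeroDivisors Eis where
  eq_zero_or_eq_zero_of_mul_eq_zero {a b} h := by
    have : nrm a * nrm b = 0 := by rw [← nrm_mul, h]; simp [nrm]
    rcases mul_eq_zero.1 this with h' | h'
    · exact Or.inl (nrm_eq_zero_iff.1 h')
    · exact Or.inr (nrm_eq_zero_iff.1 h')

instance : IsDomain Eis := NoZeroDivisors.to_isDomain Eis
section Transfer

open NumberField Polynomial

noncomputable abbrev K3 : Type := CyclotomicField 3 ℚ

instance : IsCyclotomicExtension {3} ℚ K3 := CyclotomicField.isCyclotomicExtension 3 ℚ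

instance : IsCyclotomicExtension {((3 : ℕ+) : ℕ)} ℚ K3 := CyclotomicField.isCyclotomicExtension 3 ℚ

noncomputable def zK : K3 := IsCyclotomicExtension.zeta 3 ℚ K3

lemma hzK : IsPrimitiveRoot zK ((3 : ℕ+) : ℕ) := IsCyclotomicExtension.zeta_spec 3 ℚ K3

noncomputable def zet : 𝓞 K3 := hzK.toInteger

lemma zet_cube : zet ^ 3 = 1 := hzK.toInteger_cube_eq_one

lemma zet_ne_one : zet ≠ 1 := fun h =>
  hzK.toInteger_isPrimitiveRoot.ne_one (by norm_num) h

lemma zet_rel : zet ^ 2 + zet + 1 = 0 := by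
  have h : (zet - 1) * (zet ^ 2 + zet + 1) = 0 := by
    linear_combination zet_cube
  rcases mul_eq_zero.1 h with h' | h'
  · exact absurd (by linear_combination h' : zet = 1) zet_ne_one
  · exact h'

/-- The realization map `Eis →+* 𝓞 K3`. -/
noncomputable def phi : Eis →+* 𝓞 K3 where
  toFun z := (z.re : 𝓞 K3) + z.im * zet
  map_one' := by simp
  map_mul' z w := by
    simp only [Eis.mul_re, Eis.mul_im]
    push_cast
    linear_combination (-((z.im : 𝓞 K3) * (w.im : 𝓞 K3))) * zet_rel
  map_zero' := by simp
  map_add' z w := by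
    simp only [Eis.add_re, Eis.add_im]
    push_cast
    ring

lemma phi_apply (z : Eis) : phi z = (z.re : 𝓞 K3) + z.im * zet := rfl

lemma phi_injective : Function.Injective phi := by
  rw [injective_iff_map_eq_zero]
  intro z hz
  have key : ((z.nrm : ℤ) : 𝓞 K3) = 0 := by
    have h2 : ((z.re : 𝓞 K3) + z.im * zet) * ((z.re - z.im : ℤ) - z.im * zet)
        = ((z.nrm : ℤ) : 𝓞 K3) := by
      push_cast [Eis.nrm]
      linear_combination (-(z.im : 𝓞 K3) * z.im) * zet_rel
    rw [← phi_apply, hz, zero_mul] at h2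
    exact h2.symm
  have : z.nrm = 0 := by exact_mod_cast key
  exact Eis.nrm_eq_zero_iff.1 this

lemma phi_surjective : Function.Surjective phi := by
  intro r
  obtain ⟨f, hdeg, hf⟩ := hzK.integralPowerBasis.exists_eq_aeval r
  rw [hzK.integralPowerBasis_dim] at hdeg
  have htot : (((3 : ℕ+) : ℕ)).totient = 2 := rfl
  have hdeg1 : f.natDegree ≤ 1 := by omega
  have hgen : hzK.integralPowerBasis.gen = zet := hzK.integralPowerBasis_gen
  set a := f.coeff 0 with ha
  set b := f.coeff 1 with hb
  have hfeq : f = Polynomial.C b * Polynomial.X + Polynomial.C a :=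
    eq_X_add_C_of_natDegree_le_one hdeg1
  refine ⟨⟨a, b⟩, ?_⟩
  rw [phi_apply, hf, hgen, hfeq]
  simp only [map_add, map_mul, aeval_C, aeval_X, eq_intCast, map_intCast]
  ring

/-- Transfer PID from `𝓞 K3`. -/
noncomputable def phiEquiv : Eis ≃+* 𝓞 K3 :=
  RingEquiv.ofBijective phi ⟨phi_injective, phi_surjective⟩

instance : NumberField K3 := IsCyclotomicExtension.numberField {3} ℚ K3

instance : IsPrincipalIdealRing Eis := by
  have : IsPrincipalIdealRing (𝓞 K3) := IsCyclotomicExtension.Rat.three_pid K3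
  exact IsPrincipalIdealRing.of_surjective (phiEquiv.symm : 𝓞 K3 →+* Eis)
    phiEquiv.symm.surjective

noncomputable instance : UniqueFactorizationMonoid Eis :=
  PrincipalIdealRing.to_uniqueFactorizationMonoid

noncomputable instance : GCDMonoid Eis := UniqueFactorizationMonoid.toGCDMonoid Eis

end Transfer
/-- Conjugation identity: `z * conj z = nrm z`. -/
lemma mul_conj (z : Eis) : z * ⟨z.re - z.im, -z.im⟩ = ((nrm z : ℤ) : Eis) := by
  ext <;> simp only [mul_re, mul_im, intCast_re, intCast_im, nrm] <;> ring

lemma isUnit_iff_nrm {z : Eis} : IsUnit z ↔ nrm z = 1 := by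
  constructor
  · rintro ⟨u, rfl⟩
    have h : nrm (u : Eis) * nrm ((u⁻¹ : Eisˣ) : Eis) = 1 := by
      rw [← nrm_mul]
      simp [nrm]
    have h1 : (nrm (u : Eis)).natAbs = 1 := by
      have : nrm (u : Eis) ∣ 1 := ⟨_, h.symm⟩
      rcases Int.isUnit_iff.1 (isUnit_of_dvd_one this) with h' | h'
      · simp [h']
      · simp [h']
    have := nrm_nonneg (u : Eis)
    omega
  · intro h
    refine IsUnit.of_mul_eq_one ⟨z.re - z.im, -z.im⟩ ?_
    rw [mul_conj, h]
    norm_num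

lemma nrm_dvd_of_dvd {z w : Eis} (h : z ∣ w) : nrm z ∣ nrm w := by
  rcases h with ⟨c, rfl⟩
  exact ⟨nrm c, nrm_mul z c⟩

lemma intCast_dvd_iff (n : ℤ) (z : Eis) : (n : Eis) ∣ z ↔ n ∣ z.re ∧ n ∣ z.im := by
  constructor
  · rintro ⟨w, rfl⟩
    constructor
    · exact ⟨w.re, by simp⟩
    · exact ⟨w.im, by simp⟩
  · rintro ⟨⟨p, hp⟩, ⟨q, hq⟩⟩
    exact ⟨⟨p, q⟩, by ext <;> simp [hp, hq]⟩

lemma irreducible_of_nrm_prime {z : Eis} (h : Prime (nrm z)) : Irreducible z := by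
  constructor
  · rw [isUnit_iff_nrm]
    intro h1
    rw [h1] at h
    exact h.ne_one rfl
  · intro s t hst
    have h2 : IsUnit (nrm s) ∨ IsUnit (nrm t) :=
      h.irreducible.isUnit_or_isUnit (by rw [hst, nrm_mul])
    rcases h2 with h2 | h2
    · left
      rw [isUnit_iff_nrm]
      rcases Int.isUnit_iff.1 h2 with h' | h'
      · exact h'
      · have := nrm_nonneg s; omega
    · right
      rw [isUnit_iff_nrm]
      rcases Int.isUnit_iff.1 h2 with h' | h'
      · exact h'
      · have := nrm_nonneg t; omega

lemma prime_of_nrm_prime {z : Eis} (h : Prime (nrm z)) : Prime z :=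
  (irreducible_iff_prime).1 (irreducible_of_nrm_prime h)

/-- Units are among the six explicit ones. -/
lemma unit_cases {e : Eis} (h : IsUnit e) :
    e = ⟨1, 0⟩ ∨ e = ⟨-1, 0⟩ ∨ e = ⟨0, 1⟩ ∨ e = ⟨0, -1⟩ ∨ e = ⟨1, 1⟩ ∨ e = ⟨-1, -1⟩ := by
  have h1 : nrm e = 1 := isUnit_iff_nrm.1 h
  have h4 : (2 * e.re - e.im) ^ 2 + 3 * e.im ^ 2 = 4 := by
    simp only [nrm] at h1; nlinarith [h1]
  have hb1 : e.im ≤ 1 := by nlinarith [sq_nonneg (2 * e.re - e.im)]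
  have hb2 : -1 ≤ e.im := by nlinarith [sq_nonneg (2 * e.re - e.im)]
  have ha1 : e.re ≤ 1 := by nlinarith [sq_nonneg (2 * e.re - e.im - 3), sq_nonneg e.im]
  have ha2 : -1 ≤ e.re := by nlinarith [sq_nonneg (2 * e.re - e.im + 3), sq_nonneg e.im]
  have hr : e.re = -1 ∨ e.re = 0 ∨ e.re = 1 := by omega
  have hi : e.im = -1 ∨ e.im = 0 ∨ e.im = 1 := by omega
  obtain ⟨r, i⟩ := e
  simp only [] at h4 hr hi ⊢
  rcases hr with hr | hr | hr <;> rcases hi with hi | hi | hi <;> subst hr <;> subst hi <;>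
    simp_all [Eis.mk.injEq] <;> omega
/-- `λ = 1 + 2ω = √-3`. -/
def lam : Eis := ⟨1, 2⟩
/-- `π₁ = 6 + ω`, a prime of norm 31. -/
def pi1 : Eis := ⟨6, 1⟩
/-- `π₂ = 5 - ω`, the conjugate prime of norm 31. -/
def pi2 : Eis := ⟨5, -1⟩

lemma nrm_lam : nrm lam = 3 := by simp [nrm, lam]
lemma nrm_pi1 : nrm pi1 = 31 := by simp [nrm, pi1]
lemma nrm_pi2 : nrm pi2 = 31 := by simp [nrm, pi2]

lemma prime_lam : Prime lam := prime_of_nrm_prime (by rw [nrm_lam]; norm_num)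
lemma prime_pi1 : Prime pi1 := prime_of_nrm_prime (by rw [nrm_pi1]; norm_num)
lemma prime_pi2 : Prime pi2 := prime_of_nrm_prime (by rw [nrm_pi2]; norm_num)

@[simp] lemma ofNat_re (n : ℕ) [n.AtLeastTwo] : (OfNat.ofNat n : Eis).re = OfNat.ofNat n := rfl
@[simp] lemma ofNat_im (n : ℕ) [n.AtLeastTwo] : (OfNat.ofNat n : Eis).im = 0 := rfl

lemma pi_mul : pi1 * pi2 = ((31 : ℤ) : Eis) := by
  ext <;> simp only [mul_re, mul_im, intCast_re, intCast_im, pi1, pi2] <;> norm_num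

lemma no_nrm_two (w : Eis) : nrm w ≠ 2 := by
  intro h
  have h4 : (2 * w.re - w.im) ^ 2 + 3 * w.im ^ 2 = 8 := by
    simp only [nrm] at h; nlinarith [h]
  have hb1 : w.im ≤ 1 := by nlinarith [sq_nonneg (2 * w.re - w.im)]
  have hb2 : -1 ≤ w.im := by nlinarith [sq_nonneg (2 * w.re - w.im)]
  have ha1 : w.re ≤ 1 := by nlinarith [sq_nonneg (2 * w.re - w.im - 3), sq_nonneg w.im]
  have ha2 : -1 ≤ w.re := by nlinarith [sq_nonneg (2 * w.re - w.im + 3), sq_nonneg w.im]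
  have hr : w.re = -1 ∨ w.re = 0 ∨ w.re = 1 := by omega
  have hi : w.im = -1 ∨ w.im = 0 ∨ w.im = 1 := by omega
  rcases hr with hr | hr | hr <;> rcases hi with hi | hi | hi <;>
    rw [hr, hi] at h4 <;> norm_num at h4

lemma two_eis : (2 : Eis) = ((2 : ℤ) : Eis) := by push_cast; rfl

lemma nrm_two : nrm (2 : Eis) = 4 := by
  rw [two_eis]; simp only [nrm, intCast_re, intCast_im]; norm_num

lemma prime_two : Prime (2 : Eis) := by
  rw [← irreducible_iff_prime]
  constructor
  · rw [isUnit_iff_nrm, nrm_two]; norm_num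
  · intro s t hst
    have h4 : nrm s * nrm t = 4 := by rw [← nrm_mul, ← hst, nrm_two]
    have hs0 := nrm_nonneg s
    have ht0 := nrm_nonneg t
    have hs2 := no_nrm_two s
    have ht2 := no_nrm_two t
    have ht1 : 1 ≤ nrm t := by
      rcases eq_or_lt_of_le ht0 with h | h
      · rw [← h] at h4; simp at h4
      · omega
    have hle : nrm s ≤ 4 := by nlinarith
    have h5 : nrm s = 0 ∨ nrm s = 1 ∨ nrm s = 2 ∨ nrm s = 3 ∨ nrm s = 4 := by omega
    have : nrm s = 1 ∨ nrm t = 1 := by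
      rcases h5 with h | h | h | h | h <;> rw [h] at h4
      · omega
      · exact Or.inl h
      · exact absurd h hs2
      · omega
      · right; omega
    rcases this with h | h
    · exact Or.inl (isUnit_iff_nrm.2 h)
    · exact Or.inr (isUnit_iff_nrm.2 h)

/-- `π₁` does not divide `π₂`. -/
lemma pi1_not_dvd_pi2 : ¬ pi1 ∣ pi2 := by
  rintro ⟨w, hw⟩
  have hn : nrm pi2 = nrm pi1 * nrm w := by rw [hw, nrm_mul]
  rw [nrm_pi1, nrm_pi2] at hn
  have hw1 : nrm w = 1 := by omega
  have hu : IsUnit w := isUnit_iff_nrm.2 hw1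
  rcases unit_cases hu with h | h | h | h | h | h <;> subst h <;>
    exact absurd hw (by simp [pi1, pi2, Eis.ext_iff])
section IntLemmas

/-- cast to `ZMod 2`. -/
def f2 : ZMod 8 →+* ZMod 2 := ZMod.castHom (show (2:ℕ) ∣ 8 by norm_num) (ZMod 2)
def f3 : ZMod 9 →+* ZMod 3 := ZMod.castHom (show (3:ℕ) ∣ 9 by norm_num) (ZMod 3)

lemma zmod8_fact : ∀ a b c : ZMod 8, a^2 + 3*b^2 = 31*c^3 →
    ¬(f2 a = 0 ∧ f2 b = 0) → (f2 a + f2 b ≠ 0 ∧ f2 c ≠ 0) := by decide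

lemma zmod9_fact : ∀ a b c : ZMod 9, a^2 + 3*b^2 = 31*c^3 →
    f3 b ≠ 0 → f3 a ≠ 0 := by decide

lemma zmod2_aba : ∀ a b : ZMod 2, a*b*(a-b) = 0 := by decide
lemma zmod2_s : ∀ a b : ZMod 2, ¬(a = 0 ∧ b = 0) → a^3 - 3*a*b^2 + b^3 ≠ 0 := by decide
lemma zmod2_nrm : ∀ a b : ZMod 2, a = 0 → b = 0 → a^2 - a*b + b^2 = 0 := by decide

lemma int_dvd2_iff (t : ℤ) : (2:ℤ) ∣ t ↔ ((t : ZMod 2) = 0) := by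
  rw [ZMod.intCast_zmod_eq_zero_iff_dvd]
  norm_num

lemma int_dvd3_iff (t : ℤ) : (3:ℤ) ∣ t ↔ ((t : ZMod 3) = 0) := by
  rw [ZMod.intCast_zmod_eq_zero_iff_dvd]
  norm_num

lemma parity_facts (x y z : ℤ) (h : x^2 + 3*y^2 = 31*z^3) (hxy : ¬((2:ℤ) ∣ x ∧ (2:ℤ) ∣ y)) :
    ¬ (2:ℤ) ∣ (x + y) ∧ ¬ (2:ℤ) ∣ z := by
  have h8 : ((x : ZMod 8))^2 + 3*(y : ZMod 8)^2 = 31*(z : ZMod 8)^3 := by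
    have := congrArg (fun t : ℤ => (t : ZMod 8)) h
    push_cast at this
    exact this
  have key := zmod8_fact (x : ZMod 8) (y : ZMod 8) (z : ZMod 8) h8 ?_
  · constructor
    · rw [int_dvd2_iff]
      intro hc
      refine key.1 ?_
      rw [map_intCast f2 x, map_intCast f2 y]
      push_cast at hc
      exact hc
    · rw [int_dvd2_iff]
      intro hc
      exact key.2 (by rw [map_intCast f2 z]; exact hc)
  · rintro ⟨ha, hb⟩
    rw [map_intCast f2 x] at ha
    rw [map_intCast f2 y] at hb
    exact hxy ⟨(int_dvd2_iff x).2 ha, (int_dvd2_iff y).2 hb⟩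

lemma x_not_div3 (x y z : ℤ) (h : x^2 + 3*y^2 = 31*z^3) (hy : ¬ (3:ℤ) ∣ y) :
    ¬ (3:ℤ) ∣ x := by
  have h9 : ((x : ZMod 9))^2 + 3*(y : ZMod 9)^2 = 31*(z : ZMod 9)^3 := by
    have := congrArg (fun t : ℤ => (t : ZMod 9)) h
    push_cast at this
    exact this
  have key := zmod9_fact (x : ZMod 9) (y : ZMod 9) (z : ZMod 9) h9
    (by rw [map_intCast f3 y]; exact fun hc => hy ((int_dvd3_iff y).2 hc))
  rw [map_intCast f3 x] at key
  exact fun hc => key ((int_dvd3_iff x).1 hc)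

lemma even_aba (a b : ℤ) : (2:ℤ) ∣ a*b*(a-b) := by
  rw [int_dvd2_iff]
  push_cast
  exact zmod2_aba _ _

lemma odd_s (a b : ℤ) (hab : ¬((2:ℤ) ∣ a ∧ (2:ℤ) ∣ b)) :
    ¬ (2:ℤ) ∣ (a^3 - 3*a*b^2 + b^3) := by
  rw [int_dvd2_iff]
  push_cast
  refine zmod2_s _ _ ?_
  rintro ⟨ha, hb⟩
  exact hab ⟨(int_dvd2_iff a).2 ha, (int_dvd2_iff b).2 hb⟩

lemma nrm_odd_coords (a b : ℤ) (h : ¬ (2:ℤ) ∣ (a^2 - a*b + b^2)) :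
    ¬((2:ℤ) ∣ a ∧ (2:ℤ) ∣ b) := by
  rintro ⟨ha, hb⟩
  refine h ?_
  rw [int_dvd2_iff]
  push_cast
  exact zmod2_nrm _ _ ((int_dvd2_iff a).1 ha) ((int_dvd2_iff b).1 hb)

/-- The mod-3 / mod-2 endgame. -/
lemma endgame (y P Q a b : ℤ)
    (him : 2*y = P*(3*a^2*b - 3*a*b^2) + Q*(a^3 - 3*a*b^2 + b^3) - Q*(3*a^2*b - 3*a*b^2))
    (hoddn : ¬ (2:ℤ) ∣ (a^2 - a*b + b^2))
    (hQ : Q = 1 ∨ Q = -1 ∨ Q = 5 ∨ Q = -5 ∨ Q = 6 ∨ Q = -6) : (3:ℤ) ∣ y := by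
  have hab := nrm_odd_coords a b hoddn
  have hs := odd_s a b hab
  obtain ⟨k, hk⟩ : ∃ k, 3*a^2*b - 3*a*b^2 = 2*k := by
    obtain ⟨k, hk⟩ := even_aba a b
    exact ⟨3*k, by linear_combination 3*hk⟩
  obtain ⟨m, hm⟩ : ∃ m, a^3 - 3*a*b^2 + b^3 = 2*m + 1 := by
    rcases Int.even_or_odd (a^3 - 3*a*b^2 + b^3) with ⟨r, hr⟩ | ⟨r, hr⟩
    · exact absurd ⟨r, by omega⟩ hs
    · exact ⟨r, hr⟩
  have hj : 3*a^2*b - 3*a*b^2 = 3*(a^2*b - a*b^2) := by ring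
  rcases (show (3:ℤ) ∣ Q ∨ ¬ (2:ℤ) ∣ Q by omega) with ⟨q3, hq3⟩ | hqodd
  · have h2y : (3:ℤ) ∣ 2*y := by
      refine ⟨P*(a^2*b - a*b^2) + q3*(a^3 - 3*a*b^2 + b^3) - 3*q3*(a^2*b - a*b^2), ?_⟩
      linear_combination him + (P - Q)*hj + (a^3 - 3*a*b^2 + b^3 - 3*(a^2*b - a*b^2))*hq3
    omega
  · exfalso
    have hQ2 : Q = 2*(y - P*k - Q*m + Q*k) := by
      linear_combination (-1)*him + (Q - P)*hk + (-Q)*hm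
    exact hqodd ⟨_, hQ2⟩

end IntLemmas
lemma nrm_intCast (n : ℤ) : nrm ((n : ℤ) : Eis) = n ^ 2 := by simp [nrm]

lemma nrm_assoc {p q : Eis} (h : Associated p q) : nrm p = nrm q :=
  Int.dvd_antisymm (nrm_nonneg p) (nrm_nonneg q)
    (nrm_dvd_of_dvd h.dvd) (nrm_dvd_of_dvd h.symm.dvd)

lemma pi2_not_dvd_pi1 : ¬ pi2 ∣ pi1 := by
  rintro ⟨w, hw⟩
  have hn : nrm pi1 = nrm pi2 * nrm w := by rw [hw, nrm_mul]
  rw [nrm_pi1, nrm_pi2] at hn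
  have hw1 : nrm w = 1 := by omega
  have hu : IsUnit w := isUnit_iff_nrm.2 hw1
  rcases unit_cases hu with h | h | h | h | h | h <;> subst h <;>
    exact absurd hw (by simp [pi1, pi2, Eis.ext_iff])

lemma no_common_prime {x y z : ℤ} (hprim : Int.gcd (Int.gcd x y) z = 1)
    {p : Eis} (hp : Prime p) (hx : p ∣ ((x : ℤ) : Eis)) (hy : p ∣ ((y : ℤ) : Eis))
    (hz : p ∣ ((z : ℤ) : Eis)) : False := by
  have h1 : ((Int.gcd x y : ℤ)) = x * Int.gcdA x y + y * Int.gcdB x y := Int.gcd_eq_gcd_ab x y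
  have h2 : ((Int.gcd ((Int.gcd x y : ℤ)) z : ℤ))
      = (Int.gcd x y : ℤ) * Int.gcdA ((Int.gcd x y : ℤ)) z + z * Int.gcdB ((Int.gcd x y : ℤ)) z :=
    Int.gcd_eq_gcd_ab _ z
  rw [hprim] at h2
  set A := Int.gcdA x y
  set B := Int.gcdB x y
  set C := Int.gcdA ((Int.gcd x y : ℤ)) z
  set D := Int.gcdB ((Int.gcd x y : ℤ)) z
  have hZ : (1 : ℤ) = x * (A * C) + y * (B * C) + z * D := by
    push_cast at h2
    linear_combination h2 + C * h1
  have hEis : (1 : Eis) =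
      ((x : ℤ) : Eis) * ((A * C : ℤ) : Eis) + ((y : ℤ) : Eis) * ((B * C : ℤ) : Eis)
        + ((z : ℤ) : Eis) * ((D : ℤ) : Eis) := by
    have := congrArg (fun t : ℤ => (t : Eis)) hZ
    push_cast at this ⊢
    exact_mod_cast this
  refine hp.not_unit (isUnit_of_dvd_one ?_)
  rw [hEis]
  exact dvd_add (dvd_add (hx.mul_right _) (hy.mul_right _)) (hz.mul_right _)

lemma cube_re (α : Eis) : (α ^ 3).re = α.re ^ 3 - 3 * α.re * α.im ^ 2 + α.im ^ 3 := by
  have h : α ^ 3 = α * α * α := by ring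
  rw [h]
  simp only [mul_re, mul_im]
  ring

lemma cube_im (α : Eis) : (α ^ 3).im = 3 * α.re ^ 2 * α.im - 3 * α.re * α.im ^ 2 := by
  have h : α ^ 3 = α * α * α := by ring
  rw [h]
  simp only [mul_re, mul_im]
  ring

lemma nrm_pow_three (α : Eis) : nrm (α ^ 3) = (nrm α) ^ 3 := by
  have h : α ^ 3 = α * α * α := by ring
  rw [h, nrm_mul, nrm_mul]
  ring

lemma extract_cube {u v c β β' : Eis} (hgcd : IsUnit (gcd u v)) (hβ : β ∣ u) (hβ' : β' ∣ v)
    (huv : u * v = β * β' * c ^ 3) (hb0 : β * β' ≠ 0) :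
    ∃ E α : Eis, IsUnit E ∧ u = E * β * α ^ 3 := by
  obtain ⟨u1, hu1⟩ := hβ
  obtain ⟨v1, hv1⟩ := hβ'
  have hcancel : u1 * v1 = c ^ 3 := by
    have h : (β * β') * (u1 * v1) = (β * β') * c ^ 3 := by rw [← huv, hu1, hv1]; ring
    exact mul_left_cancel₀ hb0 h
  have hg1 : IsUnit (gcd u1 v1) :=
    isUnit_of_dvd_unit
      (gcd_dvd_gcd ⟨β, by rw [hu1]; ring⟩ ⟨β', by rw [hv1]; ring⟩) hgcd
  obtain ⟨α, hα⟩ := exists_associated_pow_of_mul_eq_pow hg1 hcancel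
  obtain ⟨e, he⟩ := hα
  exact ⟨e, α, e.isUnit, by rw [hu1, ← he]; ring⟩

lemma pi1_dvd_intCast {t : ℤ} (h : (31:ℤ) ∣ t) : pi1 ∣ ((t : ℤ) : Eis) := by
  obtain ⟨s, hs⟩ := h
  refine ⟨pi2 * ((s : ℤ) : Eis), ?_⟩
  rw [hs, show ((31 * s : ℤ) : Eis) = ((31:ℤ) : Eis) * ((s:ℤ) : Eis) by push_cast; ring,
    ← pi_mul]
  ring

lemma pi2_dvd_intCast {t : ℤ} (h : (31:ℤ) ∣ t) : pi2 ∣ ((t : ℤ) : Eis) := by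
  obtain ⟨s, hs⟩ := h
  refine ⟨pi1 * ((s : ℤ) : Eis), ?_⟩
  rw [hs, show ((31 * s : ℤ) : Eis) = ((31:ℤ) : Eis) * ((s:ℤ) : Eis) by push_cast; ring,
    ← pi_mul]
  ring

lemma finish_case (x y z : ℤ) (hz2 : ¬ (2:ℤ) ∣ z) (E β α : Eis) (hE : IsUnit E)
    (hβ : β = pi1 ∨ β = pi2)
    (hfact : (⟨x + y, 2 * y⟩ : Eis) = E * β * α ^ 3)
    (hnrmu : nrm ⟨x + y, 2 * y⟩ = 31 * z ^ 3) : (3:ℤ) ∣ y := by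
  have hnE : nrm E = 1 := isUnit_iff_nrm.1 hE
  have hnβ : nrm β = 31 := by rcases hβ with rfl | rfl; exacts [nrm_pi1, nrm_pi2]
  have hzn : 31 * z ^ 3 = 31 * (nrm α) ^ 3 := by
    rw [← hnrmu, hfact, nrm_mul, nrm_mul, hnE, hnβ, nrm_pow_three]
    ring
  have hz3 : (nrm α) ^ 3 = z ^ 3 := by linarith
  have hodda : ¬ (2:ℤ) ∣ nrm α := by
    rintro ⟨t, ht⟩
    refine hz2 (Int.prime_two.dvd_of_dvd_pow (n := 3) ?_)
    exact ⟨4 * t ^ 3, by rw [← hz3, ht]; ring⟩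
  set w := E * β with hw
  have hQ : w.im = 1 ∨ w.im = -1 ∨ w.im = 5 ∨ w.im = -5 ∨
      w.im = 6 ∨ w.im = -6 := by
    rcases unit_cases hE with h | h | h | h | h | h <;> rcases hβ with h' | h' <;>
      rw [hw, h, h'] <;> norm_num [pi1, pi2, mul_im]
  have him := congrArg Eis.im hfact
  rw [show (E * β * α ^ 3) = w * α ^ 3 by rw [hw]] at him
  simp only [mul_im, cube_re, cube_im] at him
  refine endgame y w.re w.im α.re α.im ?_ (by simpa [nrm] using hodda) hQ
  rw [him]
end Eis

open Eis in
/-- Every primitive integer solution of `x² + 3y² = 31z³` has `3 ∣ y`. -/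
theorem stmt_14 (x y z : ℤ) (hprim : Int.gcd (Int.gcd x y) z = 1)
    (heq : x ^ 2 + 3 * y ^ 2 = 31 * z ^ 3) : (3 : ℤ) ∣ y := by
  by_contra h3
  have prime31 : Prime (31 : ℤ) := by norm_num
  -- basic integer facts
  have hxy2 : ¬((2:ℤ) ∣ x ∧ (2:ℤ) ∣ y) := by
    rintro ⟨⟨x1, hx1⟩, ⟨y1, hy1⟩⟩
    have h2z : (2:ℤ) ∣ z := by
      refine Int.prime_two.dvd_of_dvd_pow (n := 3) ?_
      have h31 : (31:ℤ) * z ^ 3 = 2 * (2 * x1 ^ 2 + 6 * y1 ^ 2) := by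
        rw [← heq, hx1, hy1]; ring
      rcases Int.prime_two.2.2 _ _ (⟨_, h31⟩ : (2:ℤ) ∣ 31 * z ^ 3) with h | h
      · norm_num at h
      · exact h
    obtain ⟨z1, hz1⟩ := h2z
    have h2g : (2:ℤ) ∣ (Int.gcd ((Int.gcd x y : ℤ)) z : ℤ) :=
      Int.dvd_coe_gcd (Int.dvd_coe_gcd ⟨x1, hx1⟩ ⟨y1, hy1⟩) ⟨z1, hz1⟩
    rw [hprim] at h2g
    norm_num at h2g
  obtain ⟨hxysum, hz2⟩ := parity_facts x y z heq hxy2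
  have hx3 : ¬ (3:ℤ) ∣ x := x_not_div3 x y z heq h3
  -- Eisenstein setup
  set u : Eis := ⟨x + y, 2 * y⟩ with hu
  set v : Eis := ⟨x - y, -(2 * y)⟩ with hv
  have hnu : nrm u = 31 * z ^ 3 := by
    rw [hu]; simp only [nrm]; linear_combination heq
  have hnv : nrm v = 31 * z ^ 3 := by
    rw [hv]; simp only [nrm]; linear_combination heq
  have huv : u * v = pi1 * pi2 * ((z : ℤ) : Eis) ^ 3 := by
    have h1 : u * v = ((x ^ 2 + 3 * y ^ 2 : ℤ) : Eis) := by
      rw [hu, hv]; ext <;> simp only [mul_re, mul_im, intCast_re, intCast_im] <;> ring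
    rw [h1, heq, pi_mul]
    push_cast
    ring
  have hu0 : u ≠ 0 := by
    intro h
    have hxy0 := congrArg Eis.re h
    have hy0 := congrArg Eis.im h
    rw [hu] at hxy0 hy0
    simp only [zero_re, zero_im] at hxy0 hy0
    have hx0 : x = 0 := by omega
    have hy0' : y = 0 := by omega
    have hz0 : z = 0 := by
      have : (31:ℤ) * z ^ 3 = 0 := by rw [← heq, hx0, hy0']; ring
      have hz3 : z ^ 3 = 0 := by linarith
      exact pow_eq_zero_iff (by norm_num) |>.1 hz3
    rw [hx0, hy0', hz0] at hprim
    simp [Int.gcd] at hprim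
  -- coprimality of u and v
  have hgcd : IsUnit (gcd u v) := by
    by_contra hng
    have hg0 : gcd u v ≠ 0 := fun h => hu0 ((gcd_eq_zero_iff u v).1 h).1
    obtain ⟨p, hpirr, hpg⟩ := WfDvdMonoid.exists_irreducible_factor hng hg0
    have hp : Prime p := (irreducible_iff_prime).1 hpirr
    have hpu : p ∣ u := hpg.trans (gcd_dvd_left u v)
    have hpv : p ∣ v := hpg.trans (gcd_dvd_right u v)
    have case2 : ¬ p ∣ (2 : Eis) := by
      intro hp2
      have hass : Associated p 2 := hpirr.associated_of_dvd prime_two.irreducible hp2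
      have h2u : (2 : Eis) ∣ u := hass.symm.dvd.trans hpu
      rw [two_eis, hu, intCast_dvd_iff] at h2u
      exact hxysum h2u.1
    have h2x : p ∣ (2 : Eis) * ((x : ℤ) : Eis) := by
      have hsum : u + v = (2 : Eis) * ((x : ℤ) : Eis) := by
        rw [hu, hv, two_eis]
        ext <;> simp only [add_re, add_im, mul_re, mul_im, intCast_re, intCast_im] <;> ring
      exact hsum ▸ dvd_add hpu hpv
    have hpx : p ∣ ((x : ℤ) : Eis) := by
      rcases hp.2.2 _ _ h2x with h | h
      · exact absurd h case2
      · exact h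
    have h2yl : p ∣ (2 : Eis) * ((y : ℤ) : Eis) * lam := by
      have hdiff : u - v = (2 : Eis) * ((y : ℤ) : Eis) * lam := by
        rw [hu, hv, two_eis]
        ext <;>
          simp only [sub_re, sub_im, mul_re, mul_im, intCast_re, intCast_im, lam] <;> ring
      exact hdiff ▸ dvd_sub hpu hpv
    rcases hp.2.2 _ _ h2yl with h | hplam
    · rcases hp.2.2 _ _ h with h' | hpy
      · exact case2 h'
      · -- p divides x and y; p ∣ u * v forces p ∣ 31 or p ∣ z
        have hpuv : p ∣ pi1 * pi2 * ((z : ℤ) : Eis) ^ 3 := huv ▸ hpu.mul_right v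
        rcases hp.2.2 _ _ hpuv with h31 | hz'
        · -- p divides 31 = pi1 * pi2
          have hp31 : nrm p = 31 := by
            rcases hp.2.2 _ _ h31 with hpp | hpp
            · rw [nrm_assoc (hpirr.associated_of_dvd prime_pi1.irreducible hpp), nrm_pi1]
            · rw [nrm_assoc (hpirr.associated_of_dvd prime_pi2.irreducible hpp), nrm_pi2]
          have h31x : (31:ℤ) ∣ x := by
            refine prime31.dvd_of_dvd_pow (n := 2) ?_
            rw [← nrm_intCast x, ← hp31]
            exact nrm_dvd_of_dvd hpx
          have h31y : (31:ℤ) ∣ y := by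
            refine prime31.dvd_of_dvd_pow (n := 2) ?_
            rw [← nrm_intCast y, ← hp31]
            exact nrm_dvd_of_dvd hpy
          obtain ⟨x1, hx1⟩ := h31x
          obtain ⟨y1, hy1⟩ := h31y
          have h31z : (31:ℤ) ∣ z := by
            refine prime31.dvd_of_dvd_pow (n := 3) ?_
            have heq' := heq
            rw [hx1, hy1] at heq'
            have hkey : 961 * (x1 ^ 2 + 3 * y1 ^ 2) = 31 * z ^ 3 := by linear_combination heq'
            exact ⟨x1 ^ 2 + 3 * y1 ^ 2, by linarith⟩
          have hpz : p ∣ ((z : ℤ) : Eis) := by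
            rcases hp.2.2 _ _ h31 with hpp | hpp
            · exact hpp.trans (pi1_dvd_intCast h31z)
            · exact hpp.trans (pi2_dvd_intCast h31z)
          exact no_common_prime hprim hp hpx hpy hpz
        · exact no_common_prime hprim hp hpx hpy (hp.dvd_of_dvd_pow hz')
    · -- p associated to lam, so 3 ∣ x² + 3y², giving 3 ∣ x
      have hass : Associated p lam := hpirr.associated_of_dvd prime_lam.irreducible hplam
      have hlu : lam ∣ u := hass.symm.dvd.trans hpu
      have h3n : (3:ℤ) ∣ nrm u := by
        rw [← nrm_lam]
        exact nrm_dvd_of_dvd hlu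
      rw [hnu] at h3n
      obtain ⟨t, ht⟩ := h3n
      have h3x2 : (3:ℤ) ∣ x ^ 2 := ⟨t - y ^ 2, by linear_combination heq + ht⟩
      exact hx3 (Int.prime_three.dvd_of_dvd_pow h3x2)
  -- split off the primes above 31
  have hpi1d : pi1 ∣ u ∨ pi1 ∣ v :=
    prime_pi1.2.2 u v (by rw [huv]; exact ⟨pi2 * ((z : ℤ) : Eis) ^ 3, by ring⟩)
  have hpi2d : pi2 ∣ u ∨ pi2 ∣ v :=
    prime_pi2.2.2 u v (by rw [huv]; exact ⟨pi1 * ((z : ℤ) : Eis) ^ 3, by ring⟩)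
  have hb0 : pi1 * pi2 ≠ 0 := by
    rw [pi_mul]
    intro h
    have h31 := congrArg Eis.re h
    rw [intCast_re, zero_re] at h31
    norm_num at h31
  have hb0' : pi2 * pi1 ≠ 0 := by rw [mul_comm]; exact hb0
  -- the two "31 divides u or v" cases are impossible
  have case31 : ∀ w : Eis, w = u ∨ w = v → ¬ ((31 : ℤ) : Eis) ∣ w := by
    rintro w hw ⟨w2, hw2⟩
    have hcomp : (31:ℤ) ∣ w.re ∧ (31:ℤ) ∣ w.im := by
      rw [← intCast_dvd_iff]; exact ⟨w2, hw2⟩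
    have h31x : (31:ℤ) ∣ x ∧ (31:ℤ) ∣ y := by
      have key : (31:ℤ) ∣ 2 * y → (31:ℤ) ∣ y := by
        intro h2y
        rcases prime31.2.2 2 y h2y with h' | h'
        · norm_num at h'
        · exact h'
      rcases hw with rfl | rfl
      · rw [hu] at hcomp
        obtain ⟨h1, h2⟩ := hcomp
        have hy' := key h2
        exact ⟨by simpa using dvd_sub h1 hy', hy'⟩
      · rw [hv] at hcomp
        obtain ⟨h1, h2⟩ := hcomp
        have hy' := key ((dvd_neg).1 h2)
        exact ⟨by simpa using dvd_add h1 hy', hy'⟩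
    obtain ⟨⟨x1, hx1⟩, ⟨y1, hy1⟩⟩ := h31x
    have h31z : (31:ℤ) ∣ z := by
      refine prime31.dvd_of_dvd_pow (n := 3) ?_
      have heq' := heq
      rw [hx1, hy1] at heq'
      have hkey : 961 * (x1 ^ 2 + 3 * y1 ^ 2) = 31 * z ^ 3 := by linear_combination heq'
      exact ⟨x1 ^ 2 + 3 * y1 ^ 2, by linarith⟩
    exact no_common_prime hprim prime_pi1 (pi1_dvd_intCast ⟨x1, hx1⟩)
      (pi1_dvd_intCast ⟨y1, hy1⟩) (pi1_dvd_intCast h31z)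
  -- main case split
  have hmain : ∃ E β α : Eis, IsUnit E ∧ (β = pi1 ∨ β = pi2) ∧ u = E * β * α ^ 3 := by
    rcases hpi1d with h1 | h1 <;> rcases hpi2d with h2 | h2
    · -- both divide u : 31 ∣ u, impossible
      exfalso
      obtain ⟨u1, hu1⟩ := h1
      have h2' : pi2 ∣ u1 := by
        rcases prime_pi2.2.2 _ _ (hu1 ▸ h2) with h | h
        · exact absurd h pi2_not_dvd_pi1
        · exact h
      obtain ⟨u2, hu2⟩ := h2'
      exact case31 u (Or.inl rfl) ⟨u2, by rw [hu1, hu2, ← pi_mul]; ring⟩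
    · obtain ⟨E, α, hE, hf⟩ := extract_cube hgcd h1 h2 huv hb0
      exact ⟨E, pi1, α, hE, Or.inl rfl, hf⟩
    · obtain ⟨E, α, hE, hf⟩ := extract_cube (c := ((z : ℤ) : Eis)) hgcd h2 h1 (by rw [huv]; ring) hb0'
      exact ⟨E, pi2, α, hE, Or.inr rfl, hf⟩
    · -- both divide v : 31 ∣ v, impossible
      exfalso
      obtain ⟨v1, hv1⟩ := h1
      have h2' : pi2 ∣ v1 := by
        rcases prime_pi2.2.2 _ _ (hv1 ▸ h2) with h | h
        · exact absurd h pi2_not_dvd_pi1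
        · exact h
      obtain ⟨v2, hv2⟩ := h2'
      exact case31 v (Or.inr rfl) ⟨v2, by rw [hv1, hv2, ← pi_mul]; ring⟩
  obtain ⟨E, β, α, hE, hβ, hfact⟩ := hmain
  exact h3 (finish_case x y z hz2 E β α hE hβ (hu ▸ hfact) (hu ▸ hnu))
end

section
/- The equation x² + 243·y² = 93·z³ has no primitive integer solutions, i.e. there are no x, y, z ∈ ℤ with gcd(x, y, z) = 1 and x² + 243y² = 93z³. -/
/-- A prime `p ≥ 5` with `-3` a square mod `p` is of the form `u² + 3v²`. -/
lemma rep_lemma (p : ℕ) (hp : p.Prime) (hp5 : 5 ≤ p) (s : ℤ) (hs : (p:ℤ) ∣ s^2 + 3) :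
    ∃ u v : ℤ, (p:ℤ) = u^2 + 3*v^2 := by
  haveI : Fact p.Prime := ⟨hp⟩
  obtain ⟨n, hn⟩ : ∃ n, n = Nat.sqrt p := ⟨_, rfl⟩
  -- Thue: find x y not both zero, |x|,|y| ≤ n, p ∣ x - s*y
  have hcard : Fintype.card (ZMod p) < Fintype.card (Fin (n+1) × Fin (n+1)) := by
    rw [ZMod.card, Fintype.card_prod, Fintype.card_fin]
    have h1 := Nat.lt_succ_sqrt p
    rw [hn]
    nlinarith [Nat.sqrt_le p]
  obtain ⟨a, -, b, -, hab, hfab⟩ := Finset.exists_ne_map_eq_of_card_lt_of_maps_to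
    (s := (Finset.univ : Finset (Fin (n+1) × Fin (n+1)))) (t := (Finset.univ : Finset (ZMod p)))
    (by simpa using hcard) (fun a _ => Finset.mem_univ _)
      (f := fun ij => ((ij.1 : ℕ) : ZMod p) - (s : ZMod p) * ((ij.2 : ℕ) : ZMod p))
  obtain ⟨x, hx⟩ : ∃ x : ℤ, x = (a.1 : ℤ) - (b.1 : ℤ) := ⟨_, rfl⟩
  obtain ⟨y, hy⟩ : ∃ y : ℤ, y = (a.2 : ℤ) - (b.2 : ℤ) := ⟨_, rfl⟩
  have ha1 : (a.1 : ℤ) ≤ (n:ℤ) := by exact_mod_cast a.1.is_le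
  have hb1 : (b.1 : ℤ) ≤ (n:ℤ) := by exact_mod_cast b.1.is_le
  have ha2 : (a.2 : ℤ) ≤ (n:ℤ) := by exact_mod_cast a.2.is_le
  have hb2 : (b.2 : ℤ) ≤ (n:ℤ) := by exact_mod_cast b.2.is_le
  have ha1' : (0:ℤ) ≤ (a.1 : ℤ) := by positivity
  have hb1' : (0:ℤ) ≤ (b.1 : ℤ) := by positivity
  have ha2' : (0:ℤ) ≤ (a.2 : ℤ) := by positivity
  have hb2' : (0:ℤ) ≤ (b.2 : ℤ) := by positivity
  have hxy0 : ¬ (x = 0 ∧ y = 0) := by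
    rintro ⟨h1, h2⟩
    apply hab
    rw [hx, sub_eq_zero] at h1
    rw [hy, sub_eq_zero] at h2
    have e1 : a.1 = b.1 := Fin.ext (by exact_mod_cast h1)
    have e2 : a.2 = b.2 := Fin.ext (by exact_mod_cast h2)
    exact Prod.ext e1 e2
  have hmod : (p:ℤ) ∣ x - s*y := by
    have : ((x - s*y : ℤ) : ZMod p) = 0 := by
      push_cast [hx, hy]
      linear_combination hfab
    exact (ZMod.intCast_zmod_eq_zero_iff_dvd _ _).mp this
  have hdvd : (p:ℤ) ∣ x^2 + 3*y^2 := by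
    have key : x^2 + 3*y^2 = (x - s*y)*(x + s*y) + y^2*(s^2+3) := by ring
    rw [key]
    exact dvd_add (hmod.mul_right _) (hs.mul_left _)
  -- bounds
  have hnp : (n:ℤ)^2 < (p:ℤ) := by
    have h1 : n^2 ≤ p := by rw [hn]; simpa [pow_two] using Nat.sqrt_le p
    have h2 : n^2 ≠ p := by
      intro h
      have hd : n ∣ p := ⟨n, by rw [← h]; ring⟩
      rcases (hp.eq_one_or_self_of_dvd n hd) with h1' | h1'
      · rw [h1'] at h; norm_num at h; omega
      · rw [h1'] at h; nlinarith
    exact_mod_cast lt_of_le_of_ne h1 h2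
  have hxb : x^2 ≤ (n:ℤ)^2 := by
    have h1 : -(n:ℤ) ≤ x := by rw [hx]; linarith
    have h2 : x ≤ (n:ℤ) := by rw [hx]; linarith
    nlinarith
  have hyb : y^2 ≤ (n:ℤ)^2 := by
    have h1 : -(n:ℤ) ≤ y := by rw [hy]; linarith
    have h2 : y ≤ (n:ℤ) := by rw [hy]; linarith
    nlinarith
  clear hfab hab hcard ha1 hb1 ha2 hb2 ha1' hb1' ha2' hb2' hx hy
  have hpos : 0 < x^2 + 3*y^2 := by
    rcases not_and_or.mp hxy0 with h | h <;> positivity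
  have hub : x^2 + 3*y^2 < 4*(p:ℤ) := by nlinarith
  obtain ⟨k, hk⟩ := hdvd
  have hP0 : (0:ℤ) < (p:ℤ) := by exact_mod_cast hp.pos
  have hpk : 0 < (p:ℤ) * k := hk ▸ hpos
  have hk0 : 0 < k := by
    rcases mul_pos_iff.mp hpk with ⟨-, h⟩ | ⟨h, -⟩
    · exact h
    · linarith
  have hk4 : k < 4 := by
    have : (p:ℤ) * k < (p:ℤ) * 4 := by linarith
    exact (mul_lt_mul_iff_right₀ hP0).mp this
  interval_cases k
  · exact ⟨x, y, by linarith [hk]⟩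
  · -- x² + 3y² = 2p impossible mod 4
    exfalso
    have hpodd : Odd p := hp.odd_of_ne_two (by omega)
    obtain ⟨t, ht⟩ := hpodd
    have ht' : (p:ℤ) = 2*(t:ℤ)+1 := by exact_mod_cast ht
    rw [ht'] at hk
    have hX : ∃ A : ℤ, x^2 = 4*A ∨ x^2 = 4*A+1 := by
      rcases Int.even_or_odd x with ⟨m, hm⟩ | ⟨m, hm⟩
      · exact ⟨m^2, Or.inl (by rw [hm]; ring)⟩
      · exact ⟨m^2+m, Or.inr (by rw [hm]; ring)⟩
    have hY : ∃ B : ℤ, y^2 = 4*B ∨ y^2 = 4*B+1 := by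
      rcases Int.even_or_odd y with ⟨m, hm⟩ | ⟨m, hm⟩
      · exact ⟨m^2, Or.inl (by rw [hm]; ring)⟩
      · exact ⟨m^2+m, Or.inr (by rw [hm]; ring)⟩
    obtain ⟨A, hA⟩ := hX
    obtain ⟨B, hB⟩ := hY
    rcases hA with hA | hA <;> rcases hB with hB | hB <;> rw [hA, hB] at hk <;> omega
  · -- x² + 3y² = 3p : then 3 ∣ x, and p = y² + 3(x/3)²
    have h3 : (3:ℤ) ∣ x := by
      have hpr : Prime (3:ℤ) := Int.prime_three
      apply hpr.dvd_of_dvd_pow (n := 2)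
      exact ⟨(p:ℤ) - y^2, by linarith⟩
    obtain ⟨x1, hx1⟩ := h3
    refine ⟨y, x1, ?_⟩
    rw [hx1] at hk
    have h30 : 3*((p:ℤ) - (y^2 + 3*x1^2)) = 0 := by linear_combination -hk
    linarith

/-- Division step: divide `b² + 3y²` by a prime `P = u² + 3v²`. -/
lemma step_lemma (P u v b y : ℤ) (hP : Prime P) (hPuv : P = u^2 + 3*v^2)
    (hco : IsCoprime b y) (hdvd : P ∣ b^2 + 3*y^2) :
    ∃ b' y' w, (w = v ∨ w = -v) ∧ b = u*b' - 3*w*y' ∧ y = u*y' + w*b' ∧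
      P*(b'^2 + 3*y'^2) = b^2 + 3*y^2 ∧ IsCoprime b' y' := by
  have hP0 : P ≠ 0 := hP.ne_zero
  have hPy : ¬ P ∣ y := by
    intro hy
    have hb2 : P ∣ b^2 := by
      have : b^2 = (b^2 + 3*y^2) - 3*y*y := by ring
      rw [this]
      exact dvd_sub hdvd ((hy.mul_left (3*y)))
    have hb : P ∣ b := hP.dvd_of_dvd_pow hb2
    obtain ⟨s, t, hst⟩ := hco
    exact hP.not_unit (isUnit_of_dvd_one (by
      rw [← hst]; exact dvd_add (hb.mul_left s) (hy.mul_left t)))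
  have hsplit : P ∣ (v*b - u*y) * (v*b + u*y) := by
    have e : (v*b - u*y) * (v*b + u*y) = v^2*(b^2 + 3*y^2) - P*y^2 := by
      linear_combination (y^2) * hPuv
    rw [e]
    exact dvd_sub (hdvd.mul_left _) (Dvd.intro _ rfl)
  obtain ⟨w, hwv, hdvd1⟩ : ∃ w, (w = v ∨ w = -v) ∧ P ∣ u*y - w*b := by
    rcases (hP.dvd_mul.mp hsplit) with h | h
    · exact ⟨v, Or.inl rfl, by
        obtain ⟨e, he⟩ := h
        exact ⟨-e, by linear_combination -he⟩⟩
    · exact ⟨-v, Or.inr rfl, by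
        obtain ⟨e, he⟩ := h
        exact ⟨e, by linear_combination he⟩⟩
  have hPuw : P = u^2 + 3*w^2 := by
    rcases hwv with h | h <;> rw [h] <;> linear_combination hPuv
  have hdvd2 : P ∣ u*b + 3*w*y := by
    have key : (u*b + 3*w*y)*y = b*(u*y - w*b) + w*(b^2 + 3*y^2) := by ring
    have : P ∣ (u*b + 3*w*y)*y := by
      rw [key]
      exact dvd_add (hdvd1.mul_left b) (hdvd.mul_left w)
    rcases hP.dvd_mul.mp this with h | h
    · exact h
    · exact absurd h hPy
  obtain ⟨y', hy'⟩ := hdvd1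
  obtain ⟨b', hb'⟩ := hdvd2
  refine ⟨b', y', w, hwv, ?_, ?_, ?_, ?_⟩
  · apply mul_left_cancel₀ hP0
    linear_combination u * hb' - 3*w*hy' + b * hPuw
  · apply mul_left_cancel₀ hP0
    linear_combination u * hy' + w * hb' + y * hPuw
  · apply mul_left_cancel₀ hP0
    linear_combination (-(P*b') - (u*b + 3*w*y)) * hb' + (-3*(P*y') - 3*(u*y - w*b)) * hy'
      + (-(b^2 + 3*y^2)) * hPuw
  · obtain ⟨s, t, hst⟩ := hco
    have hb2 : b = u*b' - 3*w*y' := by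
      apply mul_left_cancel₀ hP0
      linear_combination u * hb' - 3*w*hy' + b * hPuw
    have hy2 : y = u*y' + w*b' := by
      apply mul_left_cancel₀ hP0
      linear_combination u * hy' + w * hb' + y * hPuw
    exact ⟨s*u + t*w, t*u - 3*s*w, by linear_combination hst - s*hb2 - t*hy2⟩

/-- Key descent: a coprime solution of `b² + 3y² = 31c³` with `c` odd and prime to 3
has `3 ∣ y`. -/
lemma key_lemma : ∀ c : ℕ, ∀ b y : ℤ, IsCoprime b y → ¬ 2 ∣ c → ¬ 3 ∣ c →
    b^2 + 3*y^2 = 31 * (c:ℤ)^3 → (3:ℤ) ∣ y := by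
  intro c
  induction c using Nat.strong_induction_on with
  | _ c IH =>
  intro b y hco h2 h3 heq
  rcases Nat.eq_zero_or_pos c with hc0 | hc0
  · subst hc0; exact absurd (dvd_zero 2) h2
  by_cases hc1 : c = 1
  · subst hc1
    norm_num at heq
    have heq' : b*b + 3*(y*y) = 31 := by linear_combination heq
    have hb1 : -5 ≤ b := by nlinarith
    have hb2 : b ≤ 5 := by nlinarith
    have hy1 : -3 ≤ y := by nlinarith
    have hy2 : y ≤ 3 := by nlinarith
    interval_cases b <;> interval_cases y <;> omega
  -- c ≥ 2 : descent
  have hc2 : 2 ≤ c := by omega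
  obtain ⟨p, hpdef⟩ : ∃ p, p = c.minFac := ⟨_, rfl⟩
  have hp : p.Prime := hpdef ▸ Nat.minFac_prime hc1
  have hpd : p ∣ c := hpdef ▸ Nat.minFac_dvd c
  have hp2 : p ≠ 2 := fun h => h2 (h ▸ hpd)
  have hp3 : p ≠ 3 := fun h => h3 (h ▸ hpd)
  have hp5 : 5 ≤ p := by
    have h2le := hp.two_le
    have h4 : p ≠ 4 := by intro h; rw [h] at hp; norm_num at hp
    omega
  obtain ⟨d, hd⟩ := hpd
  have hd0 : d ≠ 0 := by intro h; rw [h, Nat.mul_zero] at hd; omega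
  have hdlt : d < c := by
    rw [hd]
    calc d = 1 * d := (Nat.one_mul d).symm
    _ < p * d := (Nat.mul_lt_mul_right (Nat.pos_of_ne_zero hd0)).mpr (by omega)
  have hd2 : ¬ 2 ∣ d := fun h => h2 (hd ▸ h.mul_left p)
  have hd3 : ¬ 3 ∣ d := fun h => h3 (hd ▸ h.mul_left p)
  have hP0 : ((p:ℤ)) ≠ 0 := by positivity
  have hPp : Prime ((p:ℤ)) := Nat.prime_iff_prime_int.mp hp
  have hcz : (c:ℤ) = (p:ℤ) * (d:ℤ) := by exact_mod_cast hd
  have hdvd0 : (p:ℤ) ∣ b^2 + 3*y^2 := by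
    rw [heq, hcz]
    exact Dvd.dvd.mul_left (dvd_pow (dvd_mul_right _ _) (by norm_num)) 31
  have hPy : ¬ (p:ℤ) ∣ y := by
    intro hy
    have hb2 : (p:ℤ) ∣ b^2 := by
      have e : b^2 = (b^2 + 3*y^2) - 3*y*y := by ring
      rw [e]; exact dvd_sub hdvd0 (hy.mul_left (3*y))
    have hb : (p:ℤ) ∣ b := hPp.dvd_of_dvd_pow hb2
    obtain ⟨s, t, hst⟩ := hco
    exact hPp.not_unit (isUnit_of_dvd_one
      (by rw [← hst]; exact dvd_add (hb.mul_left s) (hy.mul_left t)))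
  -- find s with s² ≡ -3 mod p
  haveI : Fact p.Prime := ⟨hp⟩
  have hy0 : (y : ZMod p) ≠ 0 := fun h => hPy ((ZMod.intCast_zmod_eq_zero_iff_dvd _ _).mp h)
  have hcmod : ((c:ℕ) : ZMod p) = 0 := by
    rw [hd]; push_cast; simp [ZMod.natCast_self]
  have heqz : (b : ZMod p)^2 = -3 * (y : ZMod p)^2 := by
    have h := congrArg (fun t : ℤ => (t : ZMod p)) heq
    push_cast at h
    rw [hcmod] at h
    ring_nf at h ⊢
    linear_combination h
  obtain ⟨s, hs⟩ : ∃ s : ℤ, (p:ℤ) ∣ s^2 + 3 := by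
    refine ⟨(((b : ZMod p) * (y : ZMod p)⁻¹).val : ℤ), ?_⟩
    rw [← ZMod.intCast_zmod_eq_zero_iff_dvd]
    push_cast
    rw [ZMod.natCast_val, ZMod.cast_id]
    have hy2 : ((y : ZMod p))^2 ≠ 0 := pow_ne_zero _ hy0
    field_simp
    linear_combination heqz
  obtain ⟨u, v, hPuv⟩ := rep_lemma p hp hp5 s hs
  -- three division steps
  obtain ⟨b1, y1, w1, hw1, hbe1, hye1, hm1, hco1⟩ := step_lemma _ u v b y hPp hPuv hco hdvd0
  have E1 : b1^2 + 3*y1^2 = 31*(p:ℤ)^2*(d:ℤ)^3 := by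
    apply mul_left_cancel₀ hP0
    rw [hm1, heq, hcz]; ring
  have hdvd1 : (p:ℤ) ∣ b1^2 + 3*y1^2 := ⟨31*(p:ℤ)*(d:ℤ)^3, by rw [E1]; ring⟩
  obtain ⟨b2, y2, w2, hw2, hbe2, hye2, hm2, hco2⟩ := step_lemma _ u v b1 y1 hPp hPuv hco1 hdvd1
  have E2 : b2^2 + 3*y2^2 = 31*(p:ℤ)*(d:ℤ)^3 := by
    apply mul_left_cancel₀ hP0
    rw [hm2, E1]; ring
  have hdvd2 : (p:ℤ) ∣ b2^2 + 3*y2^2 := ⟨31*(d:ℤ)^3, by rw [E2]; ring⟩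
  obtain ⟨b3, y3, w3, hw3, hbe3, hye3, hm3, hco3⟩ := step_lemma _ u v b2 y2 hPp hPuv hco2 hdvd2
  have E3 : b3^2 + 3*y3^2 = 31*(d:ℤ)^3 := by
    apply mul_left_cancel₀ hP0
    rw [hm3, E2]; ring
  -- sign consistency
  have mismatch : ∀ B Y B1 Y1 B2 Y2 W : ℤ, IsCoprime B Y →
      B = u*B1 - 3*W*Y1 → Y = u*Y1 + W*B1 →
      B1 = u*B2 + 3*W*Y2 → Y1 = u*Y2 - W*B2 → W = v ∨ W = -v → False := by
    intro B Y B1 Y1 B2 Y2 W hcoB hB hY hB1 hY1 hWv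
    have hW2 : W^2 = v^2 := by rcases hWv with h | h <;> rw [h] <;> ring
    have hBP : B = (p:ℤ) * B2 := by
      linear_combination hB + u*hB1 - 3*W*hY1 - B2*hPuv + 3*B2*hW2
    have hYP : Y = (p:ℤ) * Y2 := by
      linear_combination hY + u*hY1 + W*hB1 - Y2*hPuv + 3*Y2*hW2
    obtain ⟨s', t', hst⟩ := hcoB
    exact hPp.not_unit (isUnit_of_dvd_one
      (by rw [← hst]
          exact dvd_add ((Dvd.intro _ hBP.symm).mul_left s') ((Dvd.intro _ hYP.symm).mul_left t')))
  have hw21 : w2 = w1 := by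
    rcases hw1 with h1 | h1 <;> rcases hw2 with h2 | h2 <;> subst h1 <;> subst h2 <;>
      first
        | rfl
        | (exfalso
           exact mismatch b y b1 y1 b2 y2 _ hco hbe1 hye1
             (by linear_combination hbe2) (by linear_combination hye2) (by tauto))
  have hw32 : w3 = w2 := by
    rcases hw2 with h2 | h2 <;> rcases hw3 with h3 | h3 <;> subst h2 <;> subst h3 <;>
      first
        | rfl
        | (exfalso
           exact mismatch b1 y1 b2 y2 b3 y3 _ hco1 hbe2 hye2
             (by linear_combination hbe3) (by linear_combination hye3) (by tauto))
  rw [hw21] at hbe2 hye2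
  rw [hw32, hw21] at hbe3 hye3
  -- induction hypothesis
  obtain ⟨m, hm⟩ := IH d hdlt b3 y3 hco3 hd2 hd3 E3
  exact ⟨(u^3 - 9*u*w1^2)*m + (u^2*w1 - w1^3)*b3,
    by linear_combination hye1 + u*hye2 + w1*hbe2 + (u^2-3*w1^2)*hye3 + 2*u*w1*hbe3
        + (u^3-9*u*w1^2)*hm⟩

/-- The equation `x² + 243y² = 93z³` has no primitive integer solutions. -/
theorem stmt_16 :
    ¬ ∃ x y z : ℤ, Int.gcd (Int.gcd x y) z = 1 ∧
      x ^ 2 + 243 * y ^ 2 = 93 * z ^ 3 := by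
  rintro ⟨x, y, z, hgcd, heq⟩
  have h3 : Prime (3:ℤ) := Int.prime_three
  -- 3 ∣ x
  have hx3 : (3:ℤ) ∣ x := h3.dvd_of_dvd_pow (n := 2) ⟨31*z^3 - 81*y^2, by linarith⟩
  obtain ⟨a, ha⟩ := hx3
  -- 3 ∣ z
  have hz3 : (3:ℤ) ∣ z := by
    apply h3.dvd_of_dvd_pow (n := 3)
    have hd : (3:ℤ) ∣ 31 * z^3 := ⟨a^2 + 27*y^2, by rw [ha] at heq; linarith⟩
    exact (h3.dvd_mul.mp hd).resolve_left (by norm_num)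
  obtain ⟨c, hc⟩ := hz3
  -- 3 ∣ a
  have ha3 : (3:ℤ) ∣ a :=
    h3.dvd_of_dvd_pow (n := 2) ⟨93*c^3 - 9*y^2, by rw [ha, hc] at heq; nlinarith⟩
  obtain ⟨b, hb⟩ := ha3
  -- reduced equation
  have hred : b^2 + 3*y^2 = 31*c^3 := by rw [ha, hb, hc] at heq; nlinarith
  have hx9 : x = 9*b := by rw [ha, hb]; ring
  -- 3 ∤ y
  have hy3 : ¬ (3:ℤ) ∣ y := by
    intro hy
    have h1 : (3:ℤ) ∣ (Int.gcd x y : ℤ) := Int.dvd_coe_gcd ⟨3*b, by rw [hx9]; ring⟩ hy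
    have h2 : (3:ℤ) ∣ (Int.gcd (Int.gcd x y) z : ℤ) := Int.dvd_coe_gcd h1 ⟨c, hc⟩
    rw [hgcd] at h2
    norm_num at h2
  -- coprimality of b and y
  have hco : IsCoprime b y := by
    rw [Int.isCoprime_iff_gcd_eq_one]
    by_contra hg
    obtain ⟨q, hq, hqg⟩ := Nat.exists_prime_and_dvd hg
    have hqb : (q:ℤ) ∣ b := (Int.natCast_dvd_natCast.mpr hqg).trans (Int.gcd_dvd_left _ _)
    have hqy : (q:ℤ) ∣ y := (Int.natCast_dvd_natCast.mpr hqg).trans (Int.gcd_dvd_right _ _)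
    have hQ : Prime ((q:ℤ)) := Nat.prime_iff_prime_int.mp hq
    have hQc : ¬ (q:ℤ) ∣ c := by
      intro hqc
      have hgx : (q:ℤ) ∣ x := by rw [hx9]; exact hqb.mul_left 9
      have hgz : (q:ℤ) ∣ z := by rw [hc]; exact hqc.mul_left 3
      have : (q:ℤ) ∣ (Int.gcd (Int.gcd x y) z : ℤ) := Int.dvd_coe_gcd (Int.dvd_coe_gcd hgx hqy) hgz
      rw [hgcd] at this
      have := Int.le_of_dvd (by norm_num) this
      have := hq.two_le
      omega
    have hq31 : (q:ℤ) ∣ 31*c^3 := by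
      rw [← hred]
      have h1 : (q:ℤ) ∣ b^2 := by rw [pow_two]; exact hqb.mul_left b
      have h2 : (q:ℤ) ∣ 3*y^2 := by rw [pow_two]; exact (hqy.mul_left y).mul_left 3
      exact dvd_add h1 h2
    rcases hQ.dvd_mul.mp hq31 with hd31 | hdc3
    · -- q = 31
      have hq31' : q ∣ 31 := by exact_mod_cast hd31
      have hq31'' : q = 31 := (Nat.prime_dvd_prime_iff_eq hq (by norm_num)).mp hq31'
      subst hq31''
      obtain ⟨b1, hb1⟩ := hqb
      obtain ⟨y1, hy1⟩ := hqy
      have hc31 : (31:ℤ) ∣ c^3 := by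
        refine ⟨b1^2 + 3*y1^2, ?_⟩
        have h961 : (31:ℤ)*(c^3) = 31*(31*(b1^2+3*y1^2)) := by
          rw [hb1, hy1] at hred
          push_cast at hred ⊢
          linarith
        have := mul_left_cancel₀ (by norm_num : (31:ℤ) ≠ 0) h961
        exact this
      have : ((31:ℕ):ℤ) ∣ c := by
        have hp31 : Prime ((31:ℕ):ℤ) := Nat.prime_iff_prime_int.mp (by norm_num)
        exact hp31.dvd_of_dvd_pow (by push_cast; exact hc31)
      exact hQc this
    · exact hQc (hQ.dvd_of_dvd_pow hdc3)
  -- b, y not both zero, so c > 0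
  have hby : b ≠ 0 ∨ y ≠ 0 := by
    by_contra h
    push_neg at h
    obtain ⟨s, t, hst⟩ := hco
    rw [h.1, h.2] at hst
    simp at hst
  have hpos : 0 < b^2 + 3*y^2 := by
    rcases hby with h | h <;> positivity
  have hcpos : 0 < c := by
    by_contra h
    push_neg at h
    have hc3 : c^3 ≤ 0 := Odd.pow_nonpos ⟨1, by norm_num⟩ h
    linarith
  -- c odd
  have hodd : ¬ (2:ℤ) ∣ c := by
    rintro ⟨c1, hc1⟩
    have hrr : b^2 + 3*y^2 = 248*c1^3 := by rw [hc1] at hred; linarith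
    have sqodd : ∀ m : ℤ, ∃ j : ℤ, (2*m+1)^2 = 8*j+1 := by
      intro m
      obtain ⟨j, hj⟩ := Int.even_mul_succ_self m
      exact ⟨j, by linear_combination 4*hj⟩
    rcases Int.even_or_odd b with ⟨m, hm⟩ | ⟨m, hm⟩ <;>
      rcases Int.even_or_odd y with ⟨l, hl⟩ | ⟨l, hl⟩
    · -- both even: contradicts coprimality
      obtain ⟨s, t, hst⟩ := hco
      have : (2:ℤ) ∣ 1 := by
        rw [← hst]
        exact dvd_add (Dvd.dvd.mul_left ⟨m, by linarith⟩ s) (Dvd.dvd.mul_left ⟨l, by linarith⟩ t)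
      norm_num at this
    · obtain ⟨j, hj⟩ := sqodd l
      have e1 : b^2 = 4*m^2 := by rw [hm]; ring
      have e2 : y^2 = 8*j+1 := by rw [hl]; exact hj
      rw [e1, e2] at hrr
      omega
    · obtain ⟨j, hj⟩ := sqodd m
      have e1 : b^2 = 8*j+1 := by rw [hm]; exact hj
      have e2 : y^2 = 4*l^2 := by rw [hl]; ring
      rw [e1, e2] at hrr
      omega
    · obtain ⟨j, hj⟩ := sqodd m
      obtain ⟨i, hi⟩ := sqodd l
      have e1 : b^2 = 8*j+1 := by rw [hm]; exact hj
      have e2 : y^2 = 8*i+1 := by rw [hl]; exact hi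
      rw [e1, e2] at hrr
      omega
  -- 3 ∤ c
  have hc3' : ¬ (3:ℤ) ∣ c := by
    rintro ⟨c1, hc1⟩
    have hb3 : (3:ℤ) ∣ b := by
      apply h3.dvd_of_dvd_pow (n := 2)
      exact ⟨279*c1^3 - y^2, by rw [hc1] at hred; ring_nf at hred ⊢; linarith⟩
    obtain ⟨b1, hb1⟩ := hb3
    apply hy3
    apply h3.dvd_of_dvd_pow (n := 2)
    exact ⟨93*c1^3 - b1^2, by rw [hc1, hb1] at hred; ring_nf at hred ⊢; linarith⟩
  -- apply the key lemma
  have hctn : ((c.toNat : ℕ) : ℤ) = c := Int.toNat_of_nonneg hcpos.le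
  have h2n : ¬ 2 ∣ c.toNat := by
    intro h
    exact hodd (by rw [← hctn]; exact_mod_cast Int.natCast_dvd_natCast.mpr h)
  have h3n : ¬ 3 ∣ c.toNat := by
    intro h
    exact hc3' (by rw [← hctn]; exact_mod_cast Int.natCast_dvd_natCast.mpr h)
  have := key_lemma c.toNat b y hco h2n h3n (by rw [hctn]; exact hred)
  exact hy3 this
end
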